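/- arXiv:0912.0071 — 7 statements merged into one kernel-verified Lean document; each statement's English description precedes it below -/
import Mathlib

section
/- Suppose the regularizer N : ℝ^d → ℝ is differentiable and 1-strongly convex, and the loss ℓ : ℝ → ℝ is convex and differentiable with |ℓ'(z)| ≤ 1 for all z. Then Algorithm 1 (output perturbation), which outputs f_priv = argmin_f J(f, D) + b where b ∈ ℝ^d is drawn from the density ν(b) ∝ e^{−β‖b‖₂} with β = nΛε_p/2, provides ε_p-differential privacy. -/
open MeasureTheory Real Set

noncomputable section

abbrev Vec (d : ℕ) := EuclideanSpace ℝ (Fin d)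

abbrev Dataset (d n : ℕ) := Fin n → Vec d × ℝ

/-- All data points have norm at most 1 and labels in {-1, +1}. -/
def ValidDataset {d n : ℕ} (D : Dataset d n) : Prop :=
  ∀ i, ‖(D i).1‖ ≤ 1 ∧ ((D i).2 = 1 ∨ (D i).2 = -1)

/-- Two datasets differ in (at most) one entry. -/
def Neighbor {d n : ℕ} (D D' : Dataset d n) : Prop :=
  ∃ j, ∀ i, i ≠ j → D i = D' i

/-- Regularized empirical risk J(f, D). -/
def J {d n : ℕ} (ℓ : ℝ → ℝ) (N : Vec d → ℝ) (Λ : ℝ) (D : Dataset d n) (f : Vec d) : ℝ :=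
  (1 / (n : ℝ)) * ∑ i, ℓ ((D i).2 * (inner ℝ f (D i).1 : ℝ)) + Λ * N f

/-- `lam`-strong convexity. -/
def SConvex {d : ℕ} (lam : ℝ) (H : Vec d → ℝ) : Prop :=
  ∀ α : ℝ, α ∈ Set.Ioo (0 : ℝ) 1 → ∀ f g : Vec d,
    H (α • f + (1 - α) • g) ≤
      α * H f + (1 - α) * H g - (lam / 2) * α * (1 - α) * ‖f - g‖ ^ 2

/-- Unnormalized measure on ℝ^d with density e^{-β‖b‖₂}. -/
def laplaceLike (d : ℕ) (β : ℝ) : Measure (Vec d) :=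
  volume.withDensity fun b => ENNReal.ofReal (Real.exp (-β * ‖b‖))

/-- The probability measure on ℝ^d with density proportional to e^{-β‖b‖₂}. -/
def noiseP (d : ℕ) (β : ℝ) : Measure (Vec d) :=
  (laplaceLike d β Set.univ)⁻¹ • laplaceLike d β

/-- ε-differential privacy for a randomized map from datasets to classifiers in ℝ^d. -/
def DiffPrivate {d n : ℕ} (ε : ℝ) (A : Dataset d n → Measure (Vec d)) : Prop :=
  ∀ D D' : Dataset d n, ValidDataset D → ValidDataset D' → Neighbor D D' →
    ∀ S : Set (Vec d), MeasurableSet S →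
      A D S ≤ ENNReal.ofReal (Real.exp ε) * A D' S

/-- The slack term log(1 + 2c/(nΛ) + c²/(n²Λ²)) of Algorithm 2. -/
def slack (c Λ : ℝ) (n : ℕ) : ℝ :=
  Real.log (1 + 2 * c / (n * Λ) + c ^ 2 / (n ^ 2 * Λ ^ 2))

/-- The adjusted privacy parameter ε_p' of Algorithm 2. -/
def objEps (εp c Λ : ℝ) (n : ℕ) : ℝ :=
  if 0 < εp - slack c Λ n then εp - slack c Λ n else εp / 2

/-- The additional regularization Δ of Algorithm 2. -/
def objDelta (εp c Λ : ℝ) (n : ℕ) : ℝ :=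
  if 0 < εp - slack c Λ n then 0 else c / (n * (Real.exp (εp / 4) - 1)) - Λ

/-- The perturbed objective of Algorithm 2: J(f,D) + (1/n)bᵀf + (Δ/2)‖f‖². -/
def Jpriv {d n : ℕ} (ℓ : ℝ → ℝ) (N : Vec d → ℝ) (Λ Δ : ℝ) (D : Dataset d n)
    (b f : Vec d) : ℝ :=
  J ℓ N Λ D f + (1 / (n : ℝ)) * (inner ℝ b f : ℝ) + (Δ / 2) * ‖f‖ ^ 2

/-- The regularizer N(f) = ½‖f‖². -/
def halfNormSq {d : ℕ} (f : Vec d) : ℝ := ‖f‖ ^ 2 / 2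

-- minimizer of strongly convex function
lemma sconvex_min {d : ℕ} {lam : ℝ} {H : Vec d → ℝ} (hsc : SConvex lam H)
    (f1 : Vec d) (hmin : ∀ g, H f1 ≤ H g) (f2 : Vec d) :
    H f1 + (lam / 2) * ‖f1 - f2‖ ^ 2 ≤ H f2 := by
  have key : ∀ α : ℝ, α ∈ Set.Ioo (0:ℝ) 1 →
      H f1 + (lam / 2) * (1 - α) * ‖f1 - f2‖ ^ 2 ≤ H f2 := by
    intro α hα
    have h1 := hsc α hα f2 f1
    have h2 := hmin (α • f2 + (1 - α) • f1)
    have hn : ‖f2 - f1‖ = ‖f1 - f2‖ := norm_sub_rev _ _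
    rw [hn] at h1
    have hα0 := hα.1
    nlinarith [hα.2]
  have ht : Filter.Tendsto (fun α : ℝ => H f1 + (lam / 2) * (1 - α) * ‖f1 - f2‖ ^ 2)
      (nhdsWithin 0 (Set.Ioi 0)) (nhds (H f1 + (lam / 2) * (1 - 0) * ‖f1 - f2‖ ^ 2)) := by
    apply Filter.Tendsto.mono_left _ nhdsWithin_le_nhds
    exact (Continuous.tendsto (by continuity) 0)
  have hev : ∀ᶠ α in nhdsWithin (0:ℝ) (Set.Ioi 0),
      (fun α : ℝ => H f1 + (lam / 2) * (1 - α) * ‖f1 - f2‖ ^ 2) α ≤ H f2 := by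
    filter_upwards [Ioo_mem_nhdsGT_of_mem (by norm_num : (0:ℝ) ∈ Set.Ico (0:ℝ) 1)] with α hα
    exact key α hα
  have := le_of_tendsto ht hev
  linarith

-- J is Λ-strongly convex
lemma J_sconvex {d n : ℕ} (ℓ : ℝ → ℝ) (N : Vec d → ℝ) (Λ : ℝ) (hΛ : 0 ≤ Λ)
    (D : Dataset d n) (hℓconv : ConvexOn ℝ Set.univ ℓ) (hNsc : SConvex 1 N) :
    SConvex Λ (J ℓ N Λ D) := by
  intro α hα f g
  have hα0 : (0:ℝ) ≤ α := hα.1.le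
  have hα1 : (0:ℝ) ≤ 1 - α := by linarith [hα.2]
  have hsum : ∀ i : Fin n,
      ℓ ((D i).2 * (inner ℝ (α • f + (1 - α) • g) (D i).1 : ℝ)) ≤
        α * ℓ ((D i).2 * (inner ℝ f (D i).1 : ℝ)) +
        (1 - α) * ℓ ((D i).2 * (inner ℝ g (D i).1 : ℝ)) := by
    intro i
    have harg : (D i).2 * (inner ℝ (α • f + (1 - α) • g) (D i).1 : ℝ) =
        α * ((D i).2 * (inner ℝ f (D i).1 : ℝ)) +
        (1 - α) * ((D i).2 * (inner ℝ g (D i).1 : ℝ)) := by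
      rw [inner_add_left, real_inner_smul_left, real_inner_smul_left]; ring
    have := hℓconv.2 (Set.mem_univ ((D i).2 * (inner ℝ f (D i).1 : ℝ)))
      (Set.mem_univ ((D i).2 * (inner ℝ g (D i).1 : ℝ))) hα0 hα1 (by ring)
    rw [harg]
    simpa [smul_eq_mul] using this
  have hS : ∑ i, ℓ ((D i).2 * (inner ℝ (α • f + (1 - α) • g) (D i).1 : ℝ)) ≤
      ∑ i, (α * ℓ ((D i).2 * (inner ℝ f (D i).1 : ℝ)) +
        (1 - α) * ℓ ((D i).2 * (inner ℝ g (D i).1 : ℝ))) :=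
    Finset.sum_le_sum fun i _ => hsum i
  have hN := hNsc α hα f g
  have hn0 : (0:ℝ) ≤ 1 / (n:ℝ) := by positivity
  unfold J
  rw [Finset.sum_add_distrib, ← Finset.mul_sum, ← Finset.mul_sum] at hS
  have h1 : (1 / (n:ℝ)) * ∑ i, ℓ ((D i).2 * (inner ℝ (α • f + (1 - α) • g) (D i).1 : ℝ)) ≤
      (1 / (n:ℝ)) * (α * ∑ i, ℓ ((D i).2 * (inner ℝ f (D i).1 : ℝ)) +
        (1 - α) * ∑ i, ℓ ((D i).2 * (inner ℝ g (D i).1 : ℝ))) :=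
    mul_le_mul_of_nonneg_left hS hn0
  have h2 : Λ * N (α • f + (1 - α) • g) ≤
      Λ * (α * N f + (1 - α) * N g - (1 / 2) * α * (1 - α) * ‖f - g‖ ^ 2) :=
    mul_le_mul_of_nonneg_left (by linarith [hN]) hΛ
  nlinarith [h1, h2]


lemma sensitivity_bound {d n : ℕ} (hn : 0 < n) {Λ : ℝ} (hΛ : 0 < Λ)
    (ℓ : ℝ → ℝ) (N : Vec d → ℝ) (hNsc : SConvex 1 N)
    (hℓconv : ConvexOn ℝ Set.univ ℓ) (hℓdiff : Differentiable ℝ ℓ)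
    (hℓderiv : ∀ z : ℝ, |deriv ℓ z| ≤ 1)
    (fmin : Dataset d n → Vec d)
    (hfmin : ∀ D : Dataset d n, ∀ g : Vec d, J ℓ N Λ D (fmin D) ≤ J ℓ N Λ D g)
    (D D' : Dataset d n) (hD : ValidDataset D) (hD' : ValidDataset D')
    (hnb : Neighbor D D') :
    ‖fmin D - fmin D'‖ ≤ 2 / ((n : ℝ) * Λ) := by
  obtain ⟨j, hj⟩ := hnb
  set f1 := fmin D
  set f2 := fmin D'
  have hnR : (0:ℝ) < (n:ℝ) := by exact_mod_cast hn
  -- Lipschitz property of ℓ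
  have hLip : LipschitzWith 1 ℓ := by
    apply lipschitzWith_of_nnnorm_deriv_le hℓdiff
    intro x
    rw [← NNReal.coe_le_coe, coe_nnnorm, Real.norm_eq_abs]
    exact_mod_cast hℓderiv x
  have hLip' : ∀ a b : ℝ, |ℓ a - ℓ b| ≤ |a - b| := by
    intro a b
    have := hLip.dist_le_mul a b
    simpa [Real.dist_eq] using this
  -- term-wise bound
  have hterm : ∀ (x : Vec d) (y : ℝ), ‖x‖ ≤ 1 → (y = 1 ∨ y = -1) →
      |ℓ (y * (inner ℝ f2 x : ℝ)) - ℓ (y * (inner ℝ f1 x : ℝ))| ≤ ‖f1 - f2‖ := by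
    intro x y hx hy
    refine (hLip' _ _).trans ?_
    have h1 : y * (inner ℝ f2 x : ℝ) - y * (inner ℝ f1 x : ℝ) = y * (inner ℝ (f2 - f1) x : ℝ) := by
      rw [inner_sub_left]; ring
    rw [h1, abs_mul]
    have hy1 : |y| = 1 := by rcases hy with h | h <;> simp [h]
    rw [hy1, one_mul]
    calc |(inner ℝ (f2 - f1) x : ℝ)| ≤ ‖f2 - f1‖ * ‖x‖ := abs_real_inner_le_norm _ _
      _ ≤ ‖f2 - f1‖ * 1 := by
          exact mul_le_mul_of_nonneg_left hx (norm_nonneg _)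
      _ = ‖f1 - f2‖ := by rw [mul_one, norm_sub_rev]
  -- strong convexity inequalities
  have hsc1 : SConvex Λ (J ℓ N Λ D) := J_sconvex ℓ N Λ hΛ.le D hℓconv hNsc
  have hsc2 : SConvex Λ (J ℓ N Λ D') := J_sconvex ℓ N Λ hΛ.le D' hℓconv hNsc
  have h1 := sconvex_min hsc1 f1 (hfmin D) f2
  have h2 := sconvex_min hsc2 f2 (hfmin D') f1
  rw [norm_sub_rev] at h2
  -- the difference of objectives
  have hdiff : ∀ f : Vec d, J ℓ N Λ D f - J ℓ N Λ D' f =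
      (1 / (n:ℝ)) * (ℓ ((D j).2 * (inner ℝ f (D j).1 : ℝ)) -
        ℓ ((D' j).2 * (inner ℝ f (D' j).1 : ℝ))) := by
    intro f
    unfold J
    have : ∑ i, ℓ ((D i).2 * (inner ℝ f (D i).1 : ℝ)) -
        ∑ i, ℓ ((D' i).2 * (inner ℝ f (D' i).1 : ℝ)) =
        ℓ ((D j).2 * (inner ℝ f (D j).1 : ℝ)) - ℓ ((D' j).2 * (inner ℝ f (D' j).1 : ℝ)) := by
      rw [← Finset.sum_sub_distrib]
      rw [Finset.sum_eq_single j]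
      · intro i _ hij
        rw [hj i hij]; ring
      · intro h; exact absurd (Finset.mem_univ j) h
    rw [← this]
    ring
  -- combine
  have hkey : Λ * ‖f1 - f2‖ ^ 2 ≤ (1 / (n:ℝ)) * (2 * ‖f1 - f2‖) := by
    have e1 := hdiff f1
    have e2 := hdiff f2
    have b1 := hterm (D j).1 (D j).2 (hD j).1 (hD j).2
    have b2 := hterm (D' j).1 (D' j).2 (hD' j).1 (hD' j).2
    have b1' := abs_le.1 b1
    have b2' := abs_le.1 b2
    have hn0 : (0:ℝ) ≤ 1 / (n:ℝ) := by positivity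
    nlinarith [mul_le_mul_of_nonneg_left b1'.2 hn0, mul_le_mul_of_nonneg_left b2'.2 hn0,
      mul_le_mul_of_nonneg_left b1'.1 hn0, mul_le_mul_of_nonneg_left b2'.1 hn0]
  -- conclude
  rcases eq_or_lt_of_le (norm_nonneg (f1 - f2)) with h0 | h0
  · rw [← h0]; positivity
  · rw [le_div_iff₀ (by positivity)]
    rw [one_div_mul_eq_div] at hkey
    have hkey2 := (le_div_iff₀ hnR).mp hkey
    nlinarith [hkey2, h0]

lemma shifted_measure {d : ℕ} (β : ℝ) (v : Vec d) (S : Set (Vec d))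
    (hS : MeasurableSet S) :
    Measure.map (fun b => v + b) (laplaceLike d β) S =
      ∫⁻ x in S, ENNReal.ofReal (Real.exp (-β * ‖x - v‖)) := by
  have hpre : MeasurableSet ((fun b => v + b) ⁻¹' S) :=
    (measurable_const_add v) hS
  rw [Measure.map_apply (measurable_const_add v) hS]
  unfold laplaceLike
  rw [withDensity_apply _ hpre]
  rw [← lintegral_indicator hpre, ← lintegral_indicator hS]
  have heq : ∀ b : Vec d,
      ((fun b => v + b) ⁻¹' S).indicator (fun b => ENNReal.ofReal (Real.exp (-β * ‖b‖))) b =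
      S.indicator (fun x => ENNReal.ofReal (Real.exp (-β * ‖x - v‖))) (v + b) := by
    intro b
    by_cases hb : v + b ∈ S
    · rw [Set.indicator_of_mem (Set.mem_preimage.2 hb), Set.indicator_of_mem hb,
        add_sub_cancel_left]
    · rw [Set.indicator_of_notMem (fun h => hb (Set.mem_preimage.1 h)),
        Set.indicator_of_notMem hb]
  calc ∫⁻ b, ((fun b => v + b) ⁻¹' S).indicator
        (fun b => ENNReal.ofReal (Real.exp (-β * ‖b‖))) b
      = ∫⁻ b, S.indicator (fun x => ENNReal.ofReal (Real.exp (-β * ‖x - v‖))) (v + b) := by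
        exact lintegral_congr heq
    _ = ∫⁻ x, S.indicator (fun x => ENNReal.ofReal (Real.exp (-β * ‖x - v‖))) x :=
        lintegral_add_left_eq_self _ v

/-- Theorem 6: output perturbation (Algorithm 1) is ε_p-differentially
private, provided N is differentiable and 1-strongly convex and ℓ is convex and
differentiable with |ℓ'(z)| ≤ 1 for all z. The algorithm outputs
f_priv = argmin_f J(f,D) + b where b has density ∝ e^{-β‖b‖₂} with β = nΛε_p/2. -/
theorem output_perturbation_is_private
    (d n : ℕ) (hn : 0 < n) (Λ εp : ℝ) (hΛ : 0 < Λ) (hεp : 0 < εp)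
    (ℓ : ℝ → ℝ) (N : Vec d → ℝ)
    (hNdiff : Differentiable ℝ N) (hNsc : SConvex 1 N)
    (hℓconv : ConvexOn ℝ Set.univ ℓ) (hℓdiff : Differentiable ℝ ℓ)
    (hℓderiv : ∀ z : ℝ, |deriv ℓ z| ≤ 1)
    (fmin : Dataset d n → Vec d)
    (hfmin : ∀ D : Dataset d n, ∀ g : Vec d, J ℓ N Λ D (fmin D) ≤ J ℓ N Λ D g) :
    DiffPrivate εp
      (fun D => Measure.map (fun b => fmin D + b) (noiseP d ((n : ℝ) * Λ * εp / 2))) := by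
  intro D D' hD hD' hnb S hS
  set β : ℝ := (n : ℝ) * Λ * εp / 2 with hβdef
  have hnR : (0:ℝ) < (n:ℝ) := by exact_mod_cast hn
  have hβ : 0 ≤ β := by positivity
  -- sensitivity
  have hsens : ‖fmin D - fmin D'‖ ≤ 2 / ((n:ℝ) * Λ) :=
    sensitivity_bound hn hΛ ℓ N hNsc hℓconv hℓdiff hℓderiv fmin hfmin D D' hD hD' hnb
  have hβsens : β * ‖fmin D - fmin D'‖ ≤ εp := by
    calc β * ‖fmin D - fmin D'‖ ≤ β * (2 / ((n:ℝ) * Λ)) :=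
          mul_le_mul_of_nonneg_left hsens hβ
      _ = εp := by rw [hβdef]; field_simp
  -- rewrite both sides using shifted_measure
  have hmap : ∀ v : Vec d,
      Measure.map (fun b => v + b) (noiseP d β) S =
        (laplaceLike d β Set.univ)⁻¹ *
          ∫⁻ x in S, ENNReal.ofReal (Real.exp (-β * ‖x - v‖)) := by
    intro v
    unfold noiseP
    rw [Measure.map_smul, Measure.smul_apply, smul_eq_mul, shifted_measure β v S hS]
  simp only [hmap]
  -- pointwise density comparison
  have hpt : ∀ x : Vec d, ENNReal.ofReal (Real.exp (-β * ‖x - fmin D‖)) ≤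
      ENNReal.ofReal (Real.exp εp) * ENNReal.ofReal (Real.exp (-β * ‖x - fmin D'‖)) := by
    intro x
    rw [← ENNReal.ofReal_mul (Real.exp_nonneg _), ← Real.exp_add]
    apply ENNReal.ofReal_le_ofReal
    apply Real.exp_le_exp.2
    have h1 : ‖x - fmin D‖ - ‖x - fmin D'‖ ≥ -‖fmin D - fmin D'‖ := by
      have := norm_sub_norm_le (x - fmin D') (x - fmin D)
      have h2 : (x - fmin D') - (x - fmin D) = fmin D - fmin D' := by abel
      rw [h2] at this
      linarith
    nlinarith [mul_le_mul_of_nonneg_left h1.le hβ, hβsens,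
      mul_le_mul_of_nonneg_left (le_refl (‖x - fmin D‖ - ‖x - fmin D'‖)) hβ]
  have hint : (∫⁻ x in S, ENNReal.ofReal (Real.exp (-β * ‖x - fmin D‖))) ≤
      ENNReal.ofReal (Real.exp εp) *
        ∫⁻ x in S, ENNReal.ofReal (Real.exp (-β * ‖x - fmin D'‖)) := by
    rw [← lintegral_const_mul' _ _ ENNReal.ofReal_ne_top]
    exact lintegral_mono fun x => hpt x
  calc (laplaceLike d β Set.univ)⁻¹ *
        ∫⁻ x in S, ENNReal.ofReal (Real.exp (-β * ‖x - fmin D‖))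
      ≤ (laplaceLike d β Set.univ)⁻¹ *
        (ENNReal.ofReal (Real.exp εp) *
          ∫⁻ x in S, ENNReal.ofReal (Real.exp (-β * ‖x - fmin D'‖))) :=
        mul_le_mul_right hint _
    _ = ENNReal.ofReal (Real.exp εp) * ((laplaceLike d β Set.univ)⁻¹ *
          ∫⁻ x in S, ENNReal.ofReal (Real.exp (-β * ‖x - fmin D'‖))) := by
        rw [mul_left_comm]
end
end

section
/- Suppose the regularizer N : ℝ^d → ℝ is differentiable and 1-strongly convex, and the loss ℓ : ℝ → ℝ is convex and differentiable with |ℓ'(z)| ≤ 1 for all z. Then the L₂-sensitivity of regularized ERM is at most 2/(nΛ): for any two datasets D and D' of size n that differ in exactly one entry, ‖argmin_f J(f, D) − argmin_f J(f, D')‖₂ ≤ 2/(nΛ). -/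
open MeasureTheory Real Set

noncomputable section

/-- Corollary 8: if N is differentiable and 1-strongly convex and ℓ is
convex and differentiable with |ℓ'(z)| ≤ 1, then the L₂-sensitivity of regularized ERM is
at most 2/(nΛ): for datasets differing in one entry, the minimizers are 2/(nΛ)-close. -/
theorem erm_sensitivity
    (d n : ℕ) (hn : 0 < n) (Λ : ℝ) (hΛ : 0 < Λ)
    (ℓ : ℝ → ℝ) (N : Vec d → ℝ)
    (hNdiff : Differentiable ℝ N) (hNsc : SConvex 1 N)
    (hℓconv : ConvexOn ℝ Set.univ ℓ) (hℓdiff : Differentiable ℝ ℓ)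
    (hℓderiv : ∀ z : ℝ, |deriv ℓ z| ≤ 1)
    (D D' : Dataset d n) (hD : ValidDataset D) (hD' : ValidDataset D')
    (hne : Neighbor D D')
    (f₁ f₂ : Vec d)
    (hf₁ : ∀ g : Vec d, J ℓ N Λ D f₁ ≤ J ℓ N Λ D g)
    (hf₂ : ∀ g : Vec d, J ℓ N Λ D' f₂ ≤ J ℓ N Λ D' g) :
    ‖f₁ - f₂‖ ≤ 2 / ((n : ℝ) * Λ) := by
  set c : ℝ := ‖f₁ - f₂‖ with hc
  have hcn : (0:ℝ) ≤ c := norm_nonneg _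
  have hn' : (0:ℝ) < n := by exact_mod_cast hn
  -- ℓ is 1-Lipschitz
  have hlip : ∀ a b : ℝ, |ℓ a - ℓ b| ≤ |a - b| := by
    have h := lipschitzWith_of_nnnorm_deriv_le (C := 1) hℓdiff
      (fun x => by
        rw [← NNReal.coe_le_coe]
        simpa [Real.norm_eq_abs] using hℓderiv x)
    intro a b
    have := h.dist_le_mul a b
    simpa [Real.dist_eq] using this
  -- per-point lipschitz bound
  have hpt : ∀ (x : Vec d) (y : ℝ), ‖x‖ ≤ 1 → (y = 1 ∨ y = -1) →
      ∀ u v : Vec d, |ℓ (y * (inner ℝ u x : ℝ)) - ℓ (y * (inner ℝ v x : ℝ))| ≤ ‖u - v‖ := by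
    intro x y hx hy u v
    refine (hlip _ _).trans ?_
    have h1 : y * (inner ℝ u x : ℝ) - y * (inner ℝ v x : ℝ) = y * (inner ℝ (u - v) x : ℝ) := by
      rw [inner_sub_left]; ring
    rw [h1, abs_mul]
    have hy1 : |y| = 1 := by rcases hy with h | h <;> simp [h]
    rw [hy1, one_mul]
    calc |(inner ℝ (u - v) x : ℝ)| ≤ ‖u - v‖ * ‖x‖ := abs_real_inner_le_norm _ _
      _ ≤ ‖u - v‖ * 1 := by
          exact mul_le_mul_of_nonneg_left hx (norm_nonneg _)
      _ = ‖u - v‖ := mul_one _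
  -- J is Λ-strongly convex for any dataset
  have hJsc : ∀ (E : Dataset d n), SConvex Λ (J ℓ N Λ E) := by
    intro E α hα f g
    obtain ⟨hα0, hα1⟩ := hα
    have hα1' : (0:ℝ) ≤ 1 - α := by linarith
    have hsum : ∀ i : Fin n,
        ℓ ((E i).2 * (inner ℝ (α • f + (1 - α) • g) (E i).1 : ℝ)) ≤
          α * ℓ ((E i).2 * (inner ℝ f (E i).1 : ℝ)) +
          (1 - α) * ℓ ((E i).2 * (inner ℝ g (E i).1 : ℝ)) := by
      intro i
      have hin : ((E i).2 * (inner ℝ (α • f + (1 - α) • g) (E i).1 : ℝ)) =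
          α • ((E i).2 * (inner ℝ f (E i).1 : ℝ)) +
          (1 - α) • ((E i).2 * (inner ℝ g (E i).1 : ℝ)) := by
        rw [inner_add_left, real_inner_smul_left, real_inner_smul_left]
        simp [smul_eq_mul]; ring
      rw [hin]
      have := hℓconv.2 (Set.mem_univ ((E i).2 * (inner ℝ f (E i).1 : ℝ)))
        (Set.mem_univ ((E i).2 * (inner ℝ g (E i).1 : ℝ))) hα0.le hα1' (by ring)
      simpa [smul_eq_mul] using this
    have hN := hNsc α ⟨hα0, hα1⟩ f g
    have hsum' : ∑ i, ℓ ((E i).2 * (inner ℝ (α • f + (1 - α) • g) (E i).1 : ℝ)) ≤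
        ∑ i, (α * ℓ ((E i).2 * (inner ℝ f (E i).1 : ℝ)) +
          (1 - α) * ℓ ((E i).2 * (inner ℝ g (E i).1 : ℝ))) :=
      Finset.sum_le_sum fun i _ => hsum i
    simp only [J]
    have hinv : (0:ℝ) ≤ 1 / n := by positivity
    have h2 : (1 / (n:ℝ)) * ∑ i, ℓ ((E i).2 * (inner ℝ (α • f + (1 - α) • g) (E i).1 : ℝ)) ≤
        (1 / (n:ℝ)) * ∑ i, (α * ℓ ((E i).2 * (inner ℝ f (E i).1 : ℝ)) +
          (1 - α) * ℓ ((E i).2 * (inner ℝ g (E i).1 : ℝ))) :=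
      mul_le_mul_of_nonneg_left hsum' hinv
    have h3 : Λ * N (α • f + (1 - α) • g) ≤
        Λ * (α * N f + (1 - α) * N g - (1 / 2) * α * (1 - α) * ‖f - g‖ ^ 2) := by
      apply mul_le_mul_of_nonneg_left _ hΛ.le
      simpa using hN
    have h4 := add_le_add h2 h3
    refine h4.trans_eq ?_
    rw [Finset.sum_add_distrib, ← Finset.mul_sum, ← Finset.mul_sum]
    ring
  -- gap inequality from minimizers
  obtain ⟨j, hj⟩ := hne
  -- difference of objectives at a fixed point
  have hdiff : ∀ f : Vec d, J ℓ N Λ D f - J ℓ N Λ D' f =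
      (1 / (n:ℝ)) * (ℓ ((D j).2 * (inner ℝ f (D j).1 : ℝ)) -
        ℓ ((D' j).2 * (inner ℝ f (D' j).1 : ℝ))) := by
    intro f
    simp only [J]
    have : ∑ i, ℓ ((D i).2 * (inner ℝ f (D i).1 : ℝ)) -
        ∑ i, ℓ ((D' i).2 * (inner ℝ f (D' i).1 : ℝ)) =
        ∑ i, (ℓ ((D i).2 * (inner ℝ f (D i).1 : ℝ)) -
          ℓ ((D' i).2 * (inner ℝ f (D' i).1 : ℝ))) := by
      rw [Finset.sum_sub_distrib]
    have h2 : ∑ i, (ℓ ((D i).2 * (inner ℝ f (D i).1 : ℝ)) -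
          ℓ ((D' i).2 * (inner ℝ f (D' i).1 : ℝ))) =
        ℓ ((D j).2 * (inner ℝ f (D j).1 : ℝ)) - ℓ ((D' j).2 * (inner ℝ f (D' j).1 : ℝ)) := by
      apply Finset.sum_eq_single
      · intro i _ hij
        rw [hj i hij]; ring
      · intro h; exact absurd (Finset.mem_univ j) h
    calc (1 / (n:ℝ)) * ∑ i, ℓ ((D i).2 * (inner ℝ f (D i).1 : ℝ)) + Λ * N f -
        ((1 / (n:ℝ)) * ∑ i, ℓ ((D' i).2 * (inner ℝ f (D' i).1 : ℝ)) + Λ * N f)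
        = (1 / (n:ℝ)) * (∑ i, ℓ ((D i).2 * (inner ℝ f (D i).1 : ℝ)) -
          ∑ i, ℓ ((D' i).2 * (inner ℝ f (D' i).1 : ℝ))) := by ring
      _ = (1 / (n:ℝ)) * (ℓ ((D j).2 * (inner ℝ f (D j).1 : ℝ)) -
          ℓ ((D' j).2 * (inner ℝ f (D' j).1 : ℝ))) := by rw [this, h2]
  -- main inequality for each α
  have hmain : ∀ α : ℝ, α ∈ Set.Ioo (0:ℝ) 1 → Λ * (1 - α) * c ^ 2 ≤ 2 * c / n := by
    intro α hα
    obtain ⟨hα0, hα1⟩ := hα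
    -- from minimizer f₁ of J(·,D)
    have h1 : J ℓ N Λ D f₁ ≤ J ℓ N Λ D (α • f₂ + (1 - α) • f₁) := hf₁ _
    have h1' := hJsc D α ⟨hα0, hα1⟩ f₂ f₁
    have hA : (Λ / 2) * (1 - α) * ‖f₂ - f₁‖ ^ 2 ≤ J ℓ N Λ D f₂ - J ℓ N Λ D f₁ := by
      have : (Λ / 2) * α * (1 - α) * ‖f₂ - f₁‖ ^ 2 ≤ α * (J ℓ N Λ D f₂ - J ℓ N Λ D f₁) := by
        nlinarith [h1.trans h1']
      nlinarith
    have h2 : J ℓ N Λ D' f₂ ≤ J ℓ N Λ D' (α • f₁ + (1 - α) • f₂) := hf₂ _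
    have h2' := hJsc D' α ⟨hα0, hα1⟩ f₁ f₂
    have hB : (Λ / 2) * (1 - α) * ‖f₁ - f₂‖ ^ 2 ≤ J ℓ N Λ D' f₁ - J ℓ N Λ D' f₂ := by
      have : (Λ / 2) * α * (1 - α) * ‖f₁ - f₂‖ ^ 2 ≤ α * (J ℓ N Λ D' f₁ - J ℓ N Λ D' f₂) := by
        nlinarith [h2.trans h2']
      nlinarith
    have hnorm : ‖f₂ - f₁‖ = c := by rw [hc, norm_sub_rev]
    rw [hnorm] at hA
    rw [← hc] at hB
    -- combine: Λ (1-α) c² ≤ (J D f₂ - J D' f₂) + (J D' f₁ - J D f₁)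
    have hcomb : Λ * (1 - α) * c ^ 2 ≤
        (J ℓ N Λ D f₂ - J ℓ N Λ D' f₂) - (J ℓ N Λ D f₁ - J ℓ N Λ D' f₁) := by
      nlinarith
    -- bound the RHS
    rw [hdiff f₂, hdiff f₁] at hcomb
    have e1 : |ℓ ((D j).2 * (inner ℝ f₂ (D j).1 : ℝ)) - ℓ ((D j).2 * (inner ℝ f₁ (D j).1 : ℝ))|
        ≤ c := by
      have := hpt (D j).1 (D j).2 (hD j).1 (hD j).2 f₂ f₁
      rwa [norm_sub_rev, ← hc] at this
    have e2 : |ℓ ((D' j).2 * (inner ℝ f₂ (D' j).1 : ℝ)) - ℓ ((D' j).2 * (inner ℝ f₁ (D' j).1 : ℝ))|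
        ≤ c := by
      have := hpt (D' j).1 (D' j).2 (hD' j).1 (hD' j).2 f₂ f₁
      rwa [norm_sub_rev, ← hc] at this
    have e1' := abs_le.mp e1
    have e2' := abs_le.mp e2
    have hrhs : (1 / (n:ℝ)) * (ℓ ((D j).2 * (inner ℝ f₂ (D j).1 : ℝ)) -
          ℓ ((D' j).2 * (inner ℝ f₂ (D' j).1 : ℝ))) -
        (1 / (n:ℝ)) * (ℓ ((D j).2 * (inner ℝ f₁ (D j).1 : ℝ)) -
          ℓ ((D' j).2 * (inner ℝ f₁ (D' j).1 : ℝ))) ≤ 2 * c / n := by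
      have hstep : (ℓ ((D j).2 * (inner ℝ f₂ (D j).1 : ℝ)) -
            ℓ ((D' j).2 * (inner ℝ f₂ (D' j).1 : ℝ))) -
          (ℓ ((D j).2 * (inner ℝ f₁ (D j).1 : ℝ)) -
            ℓ ((D' j).2 * (inner ℝ f₁ (D' j).1 : ℝ))) ≤ 2 * c := by
        linarith [e1'.1, e1'.2, e2'.1, e2'.2]
      have hninv : (0:ℝ) ≤ ((n:ℝ))⁻¹ := by positivity
      calc (1 / (n:ℝ)) * (ℓ ((D j).2 * (inner ℝ f₂ (D j).1 : ℝ)) -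
            ℓ ((D' j).2 * (inner ℝ f₂ (D' j).1 : ℝ))) -
          (1 / (n:ℝ)) * (ℓ ((D j).2 * (inner ℝ f₁ (D j).1 : ℝ)) -
            ℓ ((D' j).2 * (inner ℝ f₁ (D' j).1 : ℝ)))
          = ((ℓ ((D j).2 * (inner ℝ f₂ (D j).1 : ℝ)) -
            ℓ ((D' j).2 * (inner ℝ f₂ (D' j).1 : ℝ))) -
          (ℓ ((D j).2 * (inner ℝ f₁ (D j).1 : ℝ)) -
            ℓ ((D' j).2 * (inner ℝ f₁ (D' j).1 : ℝ)))) * ((n:ℝ))⁻¹ := by ring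
        _ ≤ 2 * c * ((n:ℝ))⁻¹ := mul_le_mul_of_nonneg_right hstep hninv
        _ = 2 * c / (n:ℝ) := by ring
    exact hcomb.trans hrhs
  -- take the limit α → 0⁺
  have hlim : Λ * c ^ 2 ≤ 2 * c / n := by
    have htend : Filter.Tendsto (fun α : ℝ => Λ * (1 - α) * c ^ 2)
        (nhdsWithin 0 (Set.Ioi 0)) (nhds (Λ * (1 - 0) * c ^ 2)) := by
      apply Filter.Tendsto.mono_left _ nhdsWithin_le_nhds
      exact (((continuous_const.mul (continuous_const.sub continuous_id)).mul
        continuous_const).tendsto 0)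
    have hev : ∀ᶠ α in nhdsWithin (0:ℝ) (Set.Ioi 0), (fun α : ℝ => Λ * (1 - α) * c ^ 2) α ≤ 2 * c / n := by
      filter_upwards [Ioo_mem_nhdsGT_of_mem (Set.mem_Ico.mpr ⟨le_refl (0:ℝ), zero_lt_one⟩)] with α hα
      exact hmain α hα
    have := le_of_tendsto htend hev
    simpa using this
  -- conclude
  rcases eq_or_lt_of_le hcn with h0 | h0
  · rw [← h0]; positivity
  · have hlim' : (Λ * c ^ 2) * (n:ℝ) ≤ 2 * c := (le_div_iff₀ hn').mp hlim
    rw [le_div_iff₀ (by positivity : (0:ℝ) < (n:ℝ) * Λ)]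
    nlinarith [hlim', h0]
end
end

section
/- Fix a dataset D = {(x_i, y_i)}_{i=1}^n and parameters Λ > 0, Δ ≥ 0. Suppose the regularizer N : ℝ^d → ℝ is 1-strongly convex and differentiable, and the loss ℓ : ℝ → ℝ is convex and differentiable. Then the map sending b ∈ ℝ^d to f_priv = argmin_f [J(f, D) + (1/n)bᵀf + (Δ/2)‖f‖₂²] is a bijection from ℝ^d to ℝ^d; its inverse is f ↦ −nΛ∇N(f) − Σ_{i=1}^n y_i ℓ'(y_i fᵀx_i) x_i − nΔf. -/
open MeasureTheory Real Set

noncomputable section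

/-! ### Auxiliary lemmas -/

section AuxPriv

variable {d n : ℕ}

lemma inner_right_hasFDerivAt' (x f : Vec d) :
    HasFDerivAt (fun v : Vec d => (inner ℝ v x : ℝ)) (innerSL ℝ x) f := by
  have : (fun v : Vec d => (inner ℝ v x : ℝ)) = fun v => innerSL ℝ x v := by
    funext v
    simp only [innerSL_apply_apply]; exact real_inner_comm x v
  rw [this]
  exact (innerSL ℝ x).hasFDerivAt

lemma normsq_hasFDerivAt' (f : Vec d) :
    HasFDerivAt (fun v : Vec d => ‖v‖^2) ((2:ℝ) • innerSL ℝ f) f := by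
  have h : HasFDerivAt (fun v : Vec d => (inner ℝ v v : ℝ))
      ((fderivInnerCLM ℝ ((id f : Vec d), (id f : Vec d))).comp
        ((ContinuousLinearMap.id ℝ (Vec d)).prod (ContinuousLinearMap.id ℝ (Vec d)))) f :=
    (hasFDerivAt_id f).inner ℝ (hasFDerivAt_id f)
  have e : (fun v : Vec d => ‖v‖^2) = fun v : Vec d => (inner ℝ v v : ℝ) := by
    funext v; rw [real_inner_self_eq_norm_sq]
  rw [e]
  refine h.congr_fderiv ?_
  ext v
  simp [fderivInnerCLM, two_smul, real_inner_comm]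

/-- The gradient of the perturbed objective. -/
def Gvec (ℓ : ℝ → ℝ) (N : Vec d → ℝ) (Λ Δ : ℝ) (D : Dataset d n) (b f : Vec d) : Vec d :=
  (1 / (n : ℝ)) • (∑ i, ((D i).2 * deriv ℓ ((D i).2 * (inner ℝ f (D i).1 : ℝ))) • (D i).1)
    + Λ • gradient N f + (1 / (n : ℝ)) • b + Δ • f

lemma jpriv_hasFDerivAt (ℓ : ℝ → ℝ) (N : Vec d → ℝ) (Λ Δ : ℝ) (D : Dataset d n)
    (hNdiff : Differentiable ℝ N) (hℓdiff : Differentiable ℝ ℓ) (b f : Vec d) :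
    HasFDerivAt (Jpriv ℓ N Λ Δ D b) (innerSL ℝ (Gvec ℓ N Λ Δ D b f)) f := by
  have hterm : ∀ i : Fin n, HasFDerivAt
      (fun v : Vec d => ℓ ((D i).2 * (inner ℝ v (D i).1 : ℝ)))
      ((deriv ℓ ((D i).2 * (inner ℝ f (D i).1 : ℝ))) • ((D i).2 • innerSL ℝ (D i).1)) f := by
    intro i
    have h1 : HasFDerivAt (fun v : Vec d => (D i).2 * (inner ℝ v (D i).1 : ℝ))
        ((D i).2 • innerSL ℝ (D i).1) f :=
      (inner_right_hasFDerivAt' (D i).1 f).const_mul (D i).2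
    exact (hℓdiff _).hasDerivAt.comp_hasFDerivAt f h1
  have hsum : HasFDerivAt (fun v : Vec d => ∑ i, ℓ ((D i).2 * (inner ℝ v (D i).1 : ℝ)))
      (∑ i, (deriv ℓ ((D i).2 * (inner ℝ f (D i).1 : ℝ))) • ((D i).2 • innerSL ℝ (D i).1)) f :=
    HasFDerivAt.fun_sum fun i _ => hterm i
  have hN : HasFDerivAt (fun v : Vec d => Λ * N v)
      (Λ • (InnerProductSpace.toDual ℝ (Vec d) (gradient N f))) f :=
    ((hNdiff f).hasGradientAt.hasFDerivAt).const_mul Λ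
  have hb : HasFDerivAt (fun v : Vec d => (1 / (n : ℝ)) * (inner ℝ b v : ℝ))
      ((1 / (n : ℝ)) • innerSL ℝ b) f := (innerSL ℝ b).hasFDerivAt.const_mul _
  have hq : HasFDerivAt (fun v : Vec d => (Δ / 2) * ‖v‖ ^ 2)
      ((Δ / 2) • ((2:ℝ) • innerSL ℝ f)) f := (normsq_hasFDerivAt' f).const_mul _
  have htot := (((hsum.const_mul (1 / (n : ℝ))).add hN).add hb).add hq
  have hfun : Jpriv ℓ N Λ Δ D b = fun v : Vec d =>
      ((1 / (n : ℝ)) * ∑ i, ℓ ((D i).2 * (inner ℝ v (D i).1 : ℝ)) + Λ * N v)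
        + (1 / (n : ℝ)) * (inner ℝ b v : ℝ) + (Δ / 2) * ‖v‖ ^ 2 := by
    funext v; simp [Jpriv, J]
  have hE : innerSL ℝ (Gvec ℓ N Λ Δ D b f) =
      (1 / (n : ℝ)) • (∑ i, (deriv ℓ ((D i).2 * (inner ℝ f (D i).1 : ℝ))) • ((D i).2 • innerSL ℝ (D i).1))
        + Λ • (InnerProductSpace.toDual ℝ (Vec d) (gradient N f))
        + (1 / (n : ℝ)) • innerSL ℝ b + (Δ / 2) • ((2:ℝ) • innerSL ℝ f) := by
    ext v
    simp only [Gvec, innerSL_apply_apply, ContinuousLinearMap.add_apply, ContinuousLinearMap.smul_apply,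
      ContinuousLinearMap.coe_sum', Finset.sum_apply, InnerProductSpace.toDual_apply_apply,
      inner_add_left, real_inner_smul_left, sum_inner, smul_eq_mul]
    have hsum_eq : ∑ x : Fin n, (D x).2 * deriv ℓ ((D x).2 * (inner ℝ f (D x).1 : ℝ)) * (inner ℝ (D x).1 v : ℝ)
        = ∑ x : Fin n, deriv ℓ ((D x).2 * (inner ℝ f (D x).1 : ℝ)) * ((D x).2 * (inner ℝ (D x).1 v : ℝ)) :=
      Finset.sum_congr rfl fun i _ => by ring
    rw [hsum_eq]
    ring
  rw [hfun, hE]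
  exact htot

lemma gvec_zero_of_min (ℓ : ℝ → ℝ) (N : Vec d → ℝ) (Λ Δ : ℝ) (D : Dataset d n)
    (hNdiff : Differentiable ℝ N) (hℓdiff : Differentiable ℝ ℓ) (b f : Vec d)
    (h : ∀ g, Jpriv ℓ N Λ Δ D b f ≤ Jpriv ℓ N Λ Δ D b g) :
    Gvec ℓ N Λ Δ D b f = 0 := by
  have hmin : IsLocalMin (Jpriv ℓ N Λ Δ D b) f := Filter.Eventually.of_forall fun g => h g
  have h0 : fderiv ℝ (Jpriv ℓ N Λ Δ D b) f = 0 := hmin.fderiv_eq_zero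
  have hf := (jpriv_hasFDerivAt ℓ N Λ Δ D hNdiff hℓdiff b f).fderiv
  rw [h0] at hf
  have h2 : (inner ℝ (Gvec ℓ N Λ Δ D b f) (Gvec ℓ N Λ Δ D b f) : ℝ) = 0 := by
    have := congrArg (fun L : Vec d →L[ℝ] ℝ => L (Gvec ℓ N Λ Δ D b f)) hf
    simpa using this.symm
  exact inner_self_eq_zero.mp h2

lemma n_smul_gvec (ℓ : ℝ → ℝ) (N : Vec d → ℝ) (Λ Δ : ℝ) (D : Dataset d n) (hn : 0 < n)
    (b f : Vec d) :
    (n : ℝ) • Gvec ℓ N Λ Δ D b f =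
      (∑ i, ((D i).2 * deriv ℓ ((D i).2 * (inner ℝ f (D i).1 : ℝ))) • (D i).1)
        + ((n : ℝ) * Λ) • gradient N f + b + ((n : ℝ) * Δ) • f := by
  have hne : (n : ℝ) ≠ 0 := Nat.cast_ne_zero.mpr hn.ne'
  simp only [Gvec, smul_add, smul_smul]
  rw [mul_one_div_cancel hne]
  simp [one_smul]

lemma jpriv_sconvex (ℓ : ℝ → ℝ) (N : Vec d → ℝ) (Λ Δ : ℝ) (hΛ : 0 < Λ) (hΔ : 0 ≤ Δ)
    (D : Dataset d n) (hNsc : SConvex 1 N) (hℓconv : ConvexOn ℝ Set.univ ℓ) (b : Vec d) :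
    SConvex Λ (Jpriv ℓ N Λ Δ D b) := by
  intro α hα f g
  obtain ⟨hα0, hα1⟩ := hα
  have h1α : (0:ℝ) ≤ 1 - α := by linarith
  have hN := hNsc α ⟨hα0, hα1⟩ f g
  have hS : ∀ i : Fin n, ℓ ((D i).2 * (inner ℝ (α • f + (1 - α) • g) (D i).1 : ℝ)) ≤
      α * ℓ ((D i).2 * (inner ℝ f (D i).1 : ℝ)) + (1-α) * ℓ ((D i).2 * (inner ℝ g (D i).1 : ℝ)) := by
    intro i
    have harg : (D i).2 * (inner ℝ (α • f + (1 - α) • g) (D i).1 : ℝ)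
        = α * ((D i).2 * (inner ℝ f (D i).1 : ℝ)) + (1-α) * ((D i).2 * (inner ℝ g (D i).1 : ℝ)) := by
      simp only [inner_add_left, real_inner_smul_left]; ring
    rw [harg]
    exact hℓconv.2 (Set.mem_univ _) (Set.mem_univ _) hα0.le h1α (by ring)
  have hsum : (∑ i, ℓ ((D i).2 * (inner ℝ (α • f + (1 - α) • g) (D i).1 : ℝ))) ≤
      α * (∑ i, ℓ ((D i).2 * (inner ℝ f (D i).1 : ℝ)))
        + (1-α) * (∑ i, ℓ ((D i).2 * (inner ℝ g (D i).1 : ℝ))) := by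
    rw [Finset.mul_sum, Finset.mul_sum, ← Finset.sum_add_distrib]
    exact Finset.sum_le_sum fun i _ => hS i
  have hq : ‖α • f + (1 - α) • g‖ ^ 2 ≤ α * ‖f‖^2 + (1-α) * ‖g‖^2 := by
    have key : α * ‖f‖^2 + (1-α) * ‖g‖^2 - ‖α • f + (1 - α) • g‖ ^ 2
        = α * (1-α) * ‖f - g‖^2 := by
      simp only [← real_inner_self_eq_norm_sq, inner_add_left, inner_add_right,
        inner_sub_left, inner_sub_right, real_inner_smul_left, real_inner_smul_right,
        real_inner_comm g f]
      ring
    nlinarith [mul_nonneg (mul_nonneg hα0.le h1α) (sq_nonneg ‖f - g‖)]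
  have hi : (inner ℝ b (α • f + (1 - α) • g) : ℝ) = α * (inner ℝ b f : ℝ) + (1-α) * (inner ℝ b g : ℝ) := by
    simp only [inner_add_right, real_inner_smul_right]
  have hnn : (0:ℝ) ≤ 1 / (n : ℝ) := by positivity
  simp only [Jpriv, J]
  have m1 := mul_le_mul_of_nonneg_left hsum hnn
  have m2 := mul_le_mul_of_nonneg_left hN hΛ.le
  have m3 := mul_le_mul_of_nonneg_left hq (by positivity : (0:ℝ) ≤ Δ / 2)
  rw [hi]
  nlinarith [m1, m2, m3]

lemma min_of_gvec_zero (ℓ : ℝ → ℝ) (N : Vec d → ℝ) (Λ Δ : ℝ) (hΛ : 0 < Λ) (hΔ : 0 ≤ Δ)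
    (D : Dataset d n) (hNsc : SConvex 1 N) (hNdiff : Differentiable ℝ N)
    (hℓconv : ConvexOn ℝ Set.univ ℓ) (hℓdiff : Differentiable ℝ ℓ) (b f : Vec d)
    (hG : Gvec ℓ N Λ Δ D b f = 0) :
    ∀ g, Jpriv ℓ N Λ Δ D b f ≤ Jpriv ℓ N Λ Δ D b g := by
  intro g
  set H := Jpriv ℓ N Λ Δ D b with hH
  -- the line map
  have hc : ∀ t : ℝ, HasDerivAt (fun s : ℝ => f + s • (g - f)) (g - f) t := by
    intro t
    simpa using ((hasDerivAt_id t).smul_const (g - f)).const_add f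
  have hφ : HasDerivAt (fun t : ℝ => H (f + t • (g - f))) 0 0 := by
    have hF : HasFDerivAt H (innerSL ℝ (Gvec ℓ N Λ Δ D b f)) (f + (0:ℝ) • (g - f)) := by
      simpa using jpriv_hasFDerivAt ℓ N Λ Δ D hNdiff hℓdiff b f
    have := hF.comp_hasDerivAt 0 (hc 0)
    simp only [hG, map_zero, ContinuousLinearMap.zero_apply] at this
    exact this
  rw [hasDerivAt_iff_tendsto_slope] at hφ
  have hres : Filter.Tendsto (slope (fun t : ℝ => H (f + t • (g - f))) 0) (nhdsWithin 0 (Set.Ioi 0)) (nhds 0) :=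
    hφ.mono_left (nhdsWithin_mono 0 fun x hx => ne_of_gt hx)
  have hev : ∀ᶠ t in nhdsWithin (0:ℝ) (Set.Ioi 0),
      slope (fun t : ℝ => H (f + t • (g - f))) 0 t ≤ H g - H f := by
    filter_upwards [Ioo_mem_nhdsGT_of_mem (Set.mem_Ico.mpr ⟨le_refl (0:ℝ), one_pos⟩)] with t ht
    obtain ⟨ht0, ht1⟩ := ht
    have hcombo : f + t • (g - f) = (1 - t) • f + (1 - (1 - t)) • g := by
      simp only [smul_sub, sub_smul, one_smul]
      abel
    have hconv := jpriv_sconvex ℓ N Λ Δ hΛ hΔ D hNsc hℓconv b (1 - t)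
      ⟨by linarith, by linarith⟩ f g
    rw [← hH] at hconv
    have hHt : H (f + t • (g - f)) ≤ (1 - t) * H f + t * H g := by
      rw [hcombo]
      nlinarith [mul_nonneg (mul_nonneg (mul_nonneg (le_of_lt hΛ) (by linarith : (0:ℝ) ≤ 1 - t)) ht0.le) (sq_nonneg ‖f - g‖)]
    have : slope (fun t : ℝ => H (f + t • (g - f))) 0 t
        = (H (f + t • (g - f)) - H (f + (0:ℝ) • (g - f))) / t := by
      simp [slope_def_field]
    rw [this]
    rw [div_le_iff₀ ht0]
    simp only [zero_smul, add_zero]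
    nlinarith
  have := le_of_tendsto hres hev
  linarith

lemma unique_min (ℓ : ℝ → ℝ) (N : Vec d → ℝ) (Λ Δ : ℝ) (hΛ : 0 < Λ) (hΔ : 0 ≤ Δ)
    (D : Dataset d n) (hNsc : SConvex 1 N) (hℓconv : ConvexOn ℝ Set.univ ℓ) (b : Vec d)
    (f1 f2 : Vec d) (h1 : ∀ g, Jpriv ℓ N Λ Δ D b f1 ≤ Jpriv ℓ N Λ Δ D b g)
    (h2 : ∀ g, Jpriv ℓ N Λ Δ D b f2 ≤ Jpriv ℓ N Λ Δ D b g) : f1 = f2 := by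
  have hc := jpriv_sconvex ℓ N Λ Δ hΛ hΔ D hNsc hℓconv b (1/2) (by norm_num) f1 f2
  have ha := h1 ((1/2 : ℝ) • f1 + (1 - 1/2 : ℝ) • f2)
  have hb12 := h1 f2
  have hb21 := h2 f1
  have hsq : ‖f1 - f2‖ ^ 2 ≤ 0 := by nlinarith
  have : ‖f1 - f2‖ = 0 := by nlinarith [norm_nonneg (f1 - f2), sq_nonneg ‖f1 - f2‖]
  rw [norm_sub_eq_zero_iff] at this
  exact this

end AuxPriv

/-- for a fixed dataset D and parameters Λ > 0, Δ ≥ 0, with N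
1-strongly convex and differentiable and ℓ convex and differentiable, the map
b ↦ argmin_f [J(f,D) + (1/n)bᵀf + (Δ/2)‖f‖²] is a bijection of ℝ^d whose inverse is
f ↦ −nΛ∇N(f) − Σᵢ yᵢ ℓ'(yᵢ fᵀxᵢ) xᵢ − nΔf. -/
theorem objective_perturbation_bijection
    (d n : ℕ) (hn : 0 < n) (Λ Δ : ℝ) (hΛ : 0 < Λ) (hΔ : 0 ≤ Δ)
    (ℓ : ℝ → ℝ) (N : Vec d → ℝ)
    (hNsc : SConvex 1 N) (hNdiff : Differentiable ℝ N)
    (hℓconv : ConvexOn ℝ Set.univ ℓ) (hℓdiff : Differentiable ℝ ℓ)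
    (D : Dataset d n) (hD : ValidDataset D)
    (fout : Vec d → Vec d)
    (hfout : ∀ b g : Vec d, Jpriv ℓ N Λ Δ D b (fout b) ≤ Jpriv ℓ N Λ Δ D b g) :
    Function.Bijective fout ∧
    ∀ b : Vec d,
      (-(((n : ℝ) * Λ) • gradient N (fout b))
        - ∑ i, ((D i).2 * deriv ℓ ((D i).2 * (inner ℝ (fout b) (D i).1 : ℝ))) • (D i).1
        - ((n : ℝ) * Δ) • fout b) = b := by
  have hne : (n : ℝ) ≠ 0 := Nat.cast_ne_zero.mpr hn.ne'
  have hΦ : ∀ b : Vec d,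
      (-(((n : ℝ) * Λ) • gradient N (fout b))
        - ∑ i, ((D i).2 * deriv ℓ ((D i).2 * (inner ℝ (fout b) (D i).1 : ℝ))) • (D i).1
        - ((n : ℝ) * Δ) • fout b) = b := by
    intro b
    have hG := gvec_zero_of_min ℓ N Λ Δ D hNdiff hℓdiff b (fout b) (hfout b)
    have hnG := n_smul_gvec ℓ N Λ Δ D hn b (fout b)
    rw [hG, smul_zero] at hnG
    set A := ∑ i, ((D i).2 * deriv ℓ ((D i).2 * (inner ℝ (fout b) (D i).1 : ℝ))) • (D i).1 with hA
    set B := ((n : ℝ) * Λ) • gradient N (fout b) with hB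
    set Cc := ((n : ℝ) * Δ) • fout b with hC
    have h2 : b + (A + B + Cc) = 0 := by rw [hnG]; abel
    have hb := eq_neg_of_add_eq_zero_left h2
    rw [hb]; abel
  refine ⟨⟨?_, ?_⟩, hΦ⟩
  · intro a b hab
    rw [← hΦ a, ← hΦ b, hab]
  · intro f
    set b := -(((n : ℝ) * Λ) • gradient N f)
        - (∑ i, ((D i).2 * deriv ℓ ((D i).2 * (inner ℝ f (D i).1 : ℝ))) • (D i).1)
        - ((n : ℝ) * Δ) • f with hbdef
    have hG : Gvec ℓ N Λ Δ D b f = 0 := by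
      have hnG := n_smul_gvec ℓ N Λ Δ D hn b f
      have hzero : (n : ℝ) • Gvec ℓ N Λ Δ D b f = 0 := by
        rw [hnG, hbdef]; abel
      calc Gvec ℓ N Λ Δ D b f = (1 / (n : ℝ)) • ((n : ℝ) • Gvec ℓ N Λ Δ D b f) := by
            rw [smul_smul, one_div, inv_mul_cancel₀ hne, one_smul]
        _ = 0 := by rw [hzero, smul_zero]
    have hminf := min_of_gvec_zero ℓ N Λ Δ hΛ hΔ D hNsc hNdiff hℓconv hℓdiff b f hG
    exact ⟨b, unique_min ℓ N Λ Δ hΛ hΔ D hNsc hℓconv b (fout b) f (hfout b) hminf⟩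
end
end

section
/- Suppose N : ℝ^d → ℝ is doubly differentiable with ‖∇²N(f)‖₂ ≤ η (operator norm) for all f, and ℓ : ℝ → ℝ is differentiable with continuous, c-Lipschitz derivative. Given a dataset D, let f* = argmin_f J(f, D) and let f_priv = f* + b, where b ∈ ℝ^d is drawn from the density ν(b) ∝ e^{−(nΛε_p/2)‖b‖₂}. Then with probability at least 1 − δ over the draw of b, J(f_priv, D) ≤ J(f*, D) + 2d²(c + Λη)log²(d/δ)/(Λ²n²ε_p²). -/
open MeasureTheory Real Set

noncomputable section

section OPAux
open Filter
variable {β : ℝ}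

lemma factA (m : ℕ) : ((m+1 : ℕ) : ℝ) ^ m ≤ m.factorial * Real.exp m := by
  induction m with
  | zero => simp
  | succ m ih =>
    have h2 : (1 + 1/((m+1:ℕ):ℝ)) ^ (m+1) ≤ Real.exp 1 := by
      have h3 : (1 + 1/((m+1:ℕ):ℝ)) ≤ Real.exp (1/((m+1:ℕ):ℝ)) := by
        have := Real.add_one_le_exp (1/((m+1:ℕ):ℝ)); linarith
      calc (1 + 1/((m+1:ℕ):ℝ)) ^ (m+1) ≤ (Real.exp (1/((m+1:ℕ):ℝ)))^(m+1) := by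
            apply pow_le_pow_left₀ (by positivity) h3
        _ = Real.exp 1 := by
            rw [← Real.exp_nat_mul]
            congr 1
            field_simp
    have hb : ((m+1+1:ℕ):ℝ) = ((m+1:ℕ):ℝ) * (1 + 1/((m+1:ℕ):ℝ)) := by
      push_cast; field_simp
    have h1 : ((m+1+1 : ℕ) : ℝ) ^ (m+1) ≤ ((m+1:ℕ):ℝ) ^ (m+1) * Real.exp 1 := by
      calc ((m+1+1 : ℕ) : ℝ) ^ (m+1) = ((m+1:ℕ):ℝ)^(m+1) * (1 + 1/((m+1:ℕ):ℝ))^(m+1) := by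
            rw [hb, mul_pow]
        _ ≤ ((m+1:ℕ):ℝ)^(m+1) * Real.exp 1 := by
            apply mul_le_mul_of_nonneg_left h2 (by positivity)
    have h4 : ((m+1:ℕ):ℝ) ^ (m+1) = ((m+1:ℕ):ℝ) * ((m+1:ℕ):ℝ)^m := by ring
    have h5 : ((m+1:ℕ):ℝ) * ((m+1:ℕ):ℝ)^m * Real.exp 1 ≤
        ((m+1:ℕ):ℝ) * (m.factorial * Real.exp m) * Real.exp 1 := by
      apply mul_le_mul_of_nonneg_right _ (Real.exp_pos 1).le
      exact mul_le_mul_of_nonneg_left ih (by positivity)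
    have h6 : ((m+1:ℕ):ℝ) * (m.factorial * Real.exp m) * Real.exp 1 =
        (m+1).factorial * Real.exp ((m+1:ℕ):ℝ) := by
      rw [Nat.factorial_succ]
      push_cast
      rw [Real.exp_add]
      ring
    calc ((m+1+1 : ℕ) : ℝ) ^ (m+1) ≤ ((m+1:ℕ):ℝ) * ((m+1:ℕ):ℝ)^m * Real.exp 1 := by
          rw [← h4]; exact h1
      _ ≤ ((m+1:ℕ):ℝ) * (m.factorial * Real.exp m) * Real.exp 1 := h5
      _ = (m+1).factorial * Real.exp ((m+1:ℕ):ℝ) := h6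

lemma lemA (k : ℕ) (x : ℝ) (hx : 0 ≤ x) :
    x ^ k * Real.exp (-((k:ℝ)/(k+1)) * x) ≤ k.factorial := by
  set u : ℝ := x / (k+1) with hu
  have hu0 : 0 ≤ u := by positivity
  have hx' : x = ((k:ℝ)+1) * u := by rw [hu]; field_simp
  have hue : u * Real.exp (-u) ≤ Real.exp (-1) := by
    have h := Real.add_one_le_exp (u - 1)
    have h2 : u ≤ Real.exp (u - 1) := by linarith
    calc u * Real.exp (-u) ≤ Real.exp (u-1) * Real.exp (-u) := by
          apply mul_le_mul_of_nonneg_right h2 (Real.exp_pos _).le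
      _ = Real.exp (-1) := by rw [← Real.exp_add]; ring_nf
  have key : x ^ k * Real.exp (-((k:ℝ)/(k+1)) * x) = ((k:ℝ)+1)^k * (u * Real.exp (-u))^k := by
    have e1 : -((k:ℝ)/(k+1)) * x = (k:ℕ) * (-u) := by
      rw [hx']; push_cast; field_simp
    rw [e1, Real.exp_nat_mul, hx', mul_pow, mul_pow]; ring
  rw [key]
  calc ((k:ℝ)+1)^k * (u * Real.exp (-u))^k ≤ ((k:ℝ)+1)^k * (Real.exp (-1))^k := by
        apply mul_le_mul_of_nonneg_left (pow_le_pow_left₀ (by positivity) hue k) (by positivity)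
    _ ≤ (k.factorial * Real.exp k) * (Real.exp (-1))^k := by
        apply mul_le_mul_of_nonneg_right _ (by positivity)
        have := factA k
        push_cast at this ⊢
        exact this
    _ = k.factorial := by
        rw [← Real.exp_nat_mul, mul_assoc, ← Real.exp_add]
        simp

variable {β : ℝ}

lemma intOn_pow_exp (hβ : 0 < β) (m : ℕ) {T : ℝ} (hT : 0 ≤ T) :
    IntegrableOn (fun r : ℝ => r ^ m * Real.exp (-β * r)) (Ioi T) := by
  have h := integrableOn_rpow_mul_exp_neg_mul_rpow (p := 1) (s := m) (b := β)
    (by linarith [Nat.cast_nonneg (α:=ℝ) m]) zero_lt_one hβ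
  have h2 : IntegrableOn (fun r : ℝ => r ^ m * Real.exp (-β * r)) (Ioi 0) := by
    apply h.congr_fun _ measurableSet_Ioi
    intro x hx
    simp only [Real.rpow_one, Real.rpow_natCast]
  exact h2.mono_set (Ioi_subset_Ioi hT)

lemma tendsto_pow_exp (hβ : 0 < β) (m : ℕ) :
    Tendsto (fun r : ℝ => r ^ m * Real.exp (-β * r)) atTop (nhds 0) := by
  have h := tendsto_rpow_mul_exp_neg_mul_atTop_nhds_zero m β hβ
  convert h using 2 with r
  rw [Real.rpow_natCast]

lemma ig_base (hβ : 0 < β) (T : ℝ) :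
    ∫ r in Ioi T, Real.exp (-β * r) = Real.exp (-β * T) / β := by
  have hderiv : ∀ x ∈ Ici T, HasDerivAt (fun r => -Real.exp (-β * r) / β)
      (Real.exp (-β * x)) x := by
    intro x _
    have h : HasDerivAt (fun r : ℝ => -β * r) (-β) x := by simpa using (hasDerivAt_id x).const_mul (-β)
    have := (h.exp.neg).div_const β
    refine this.congr_deriv ?_
    field_simp
  have htend : Tendsto (fun r => -Real.exp (-β * r) / β) atTop (nhds 0) := by
    have := (tendsto_pow_exp hβ 0).neg.div_const β
    simpa using this
  have := integral_Ioi_of_hasDerivAt_of_nonneg' hderiv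
    (fun x _ => (Real.exp_pos _).le) htend
  rw [this]; ring

lemma ig_step (hβ : 0 < β) (m : ℕ) {T : ℝ} (hT : 0 ≤ T) :
    ∫ r in Ioi T, r ^ (m+1) * Real.exp (-β * r)
      = T ^ (m+1) * Real.exp (-β * T) / β
        + ((m+1 : ℝ)/β) * ∫ r in Ioi T, r ^ m * Real.exp (-β * r) := by
  set g' : ℝ → ℝ := fun r => r ^ (m+1) * Real.exp (-β * r)
    - ((m+1:ℝ)/β) * (r ^ m * Real.exp (-β * r)) with hg'
  have hderiv : ∀ x ∈ Ici T, HasDerivAt (fun r => -(r ^ (m+1) * Real.exp (-β * r)) / β)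
      (g' x) x := by
    intro x _
    have h1 : HasDerivAt (fun r : ℝ => r ^ (m+1)) ((m+1 : ℝ) * x ^ m) x := by
      simpa using hasDerivAt_pow (m+1) x
    have h2 : HasDerivAt (fun r : ℝ => Real.exp (-β * r)) (-β * Real.exp (-β * x)) x := by
      have h : HasDerivAt (fun r : ℝ => -β * r) (-β) x := by simpa using (hasDerivAt_id x).const_mul (-β)
      simpa [mul_comm] using h.exp
    have h3 := ((h1.mul h2).neg).div_const β
    refine h3.congr_deriv ?_
    rw [hg']
    field_simp
    ring
  have htend : Tendsto (fun r => -(r ^ (m+1) * Real.exp (-β * r)) / β) atTop (nhds 0) := by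
    have := (tendsto_pow_exp hβ (m+1)).neg.div_const β
    simpa using this
  have hint : IntegrableOn g' (Ioi T) :=
    (intOn_pow_exp hβ (m+1) hT).sub ((intOn_pow_exp hβ m hT).const_mul _)
  have key := integral_Ioi_of_hasDerivAt_of_tendsto'
    (f := fun r => -(r ^ (m+1) * Real.exp (-β * r)) / β) hderiv hint htend
  rw [hg'] at key
  rw [integral_sub (intOn_pow_exp hβ (m+1) hT) ((intOn_pow_exp hβ m hT).const_mul _),
    integral_const_mul] at key
  simp only [zero_sub, neg_div, neg_neg] at key
  linarith [key]

variable {β : ℝ}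


lemma ig_zero (hβ : 0 < β) (m : ℕ) :
    ∫ r in Ioi (0:ℝ), r ^ m * Real.exp (-β * r) = m.factorial / β ^ (m+1) := by
  induction m with
  | zero =>
    simp only [pow_zero, one_mul]
    rw [ig_base hβ 0]
    simp
  | succ m ih =>
    rw [ig_step hβ m le_rfl, ih]
    rw [Nat.factorial_succ]
    push_cast
    field_simp
    ring

lemma ig_tail (hβ : 0 < β) (m : ℕ) (T : ℝ) (hT : 0 ≤ T) :
    ∫ r in Ioi T, r ^ m * Real.exp (-β * r)
      ≤ ((m:ℝ)+1) * Real.exp (-β * T / ((m:ℝ)+1)) * m.factorial / β ^ (m+1) := by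
  induction m generalizing T with
  | zero =>
    simp only [pow_zero, one_mul, Nat.cast_zero, zero_add, Nat.factorial_zero,
      Nat.cast_one, pow_one, div_one, mul_one, one_mul]
    rw [ig_base hβ T]
  | succ m ih =>
    rw [ig_step hβ m hT]
    push_cast
    have hβT : 0 ≤ β * T := by positivity
    set E : ℝ := Real.exp (-β * T / ((m:ℝ)+2)) with hE
    have hEpos : 0 < E := Real.exp_pos _
    have hsplit : Real.exp (-β * T)
        = Real.exp (-(((m:ℝ)+1)/((m:ℝ)+1+1)) * (β*T)) * E := by
      rw [hE, ← Real.exp_add]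
      congr 1
      field_simp
      ring
    have h1 : β ^ (m+1) * (T ^ (m+1) * Real.exp (-β * T)) ≤ (m+1).factorial * E := by
      have hA := lemA (m+1) (β * T) hβT
      push_cast at hA
      calc β ^ (m+1) * (T ^ (m+1) * Real.exp (-β * T))
          = ((β*T) ^ (m+1) * Real.exp (-(((m:ℝ)+1)/((m:ℝ)+1+1)) * (β*T))) * E := by
            rw [hsplit, mul_pow]; ring
        _ ≤ (m+1).factorial * E := by
            apply mul_le_mul_of_nonneg_right hA hEpos.le
    have e3 : T ^ (m+1) * Real.exp (-β * T) / β ≤ (m+1).factorial * E / β ^ (m+2) := by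
      have heq : T ^ (m+1) * Real.exp (-β * T) / β
          = β ^ (m+1) * (T ^ (m+1) * Real.exp (-β * T)) / β ^ (m+2) := by
        field_simp
        ring
      rw [heq]
      gcongr
    have e4 : ∫ r in Ioi T, r ^ m * Real.exp (-β * r)
        ≤ ((m:ℝ)+1) * E * m.factorial / β ^ (m+1) := by
      refine (ih T hT).trans ?_
      gcongr
      rw [hE]
      apply Real.exp_le_exp.mpr
      rw [neg_mul, neg_div, neg_div, neg_le_neg_iff]
      apply div_le_div_of_nonneg_left hβT (by positivity) (by linarith)
    calc T ^ (m+1) * Real.exp (-β * T) / β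
          + (((m:ℝ)+1)/β) * ∫ r in Ioi T, r ^ m * Real.exp (-β * r)
        ≤ (m+1).factorial * E / β ^ (m+2)
          + (((m:ℝ)+1)/β) * (((m:ℝ)+1) * E * m.factorial / β ^ (m+1)) := by
          gcongr
      _ = ((m:ℝ)+1+1) * Real.exp (-β * T / ((m:ℝ)+1+1)) * (m+1).factorial / β ^ (m+1+1) := by
          rw [hE]
          have : ((m:ℝ)+2) = ((m:ℝ)+1+1) := by ring
          rw [this]
          push_cast [Nat.factorial_succ]
          field_simp
          ring


variable {β : ℝ}

lemma intG (d : ℕ) (hβ : 0 < β) : Integrable (fun x : Vec d => Real.exp (-β * ‖x‖)) := by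
  have hnr : (Module.finrank ℝ (Vec d) : ℝ) < (d+1 : ℝ) := by
    rw [finrank_euclideanSpace_fin]; linarith
  set C₀ : ℝ := (d+1).factorial * Real.exp β / β ^ (d+1) with hC₀
  refine Integrable.mono' ((integrable_one_add_norm (E := Vec d) hnr).const_mul C₀)
    (Continuous.aestronglyMeasurable (by continuity)) ?_
  filter_upwards with x
  have ht : (0:ℝ) ≤ ‖x‖ := norm_nonneg _
  set t : ℝ := ‖x‖
  have hpow : (1 + t) ^ ((-(d+1) : ℝ)) = 1 / (1+t) ^ (d+1) := by
    rw [Real.rpow_neg (by linarith), one_div]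
    congr 1
    rw [show ((d:ℝ)+1) = ((d+1 : ℕ) : ℝ) by push_cast; ring, Real.rpow_natCast]
  have key : (1+t)^(d+1) * Real.exp (-β * t) ≤ C₀ := by
    have h1 : (β * (1+t)) ^ (d+1) / (d+1).factorial ≤ Real.exp (β * (1+t)) :=
      Real.pow_div_factorial_le_exp _ (by positivity) _
    have h2 : Real.exp (β * (1+t)) = Real.exp β * Real.exp (β * t) := by
      rw [← Real.exp_add]; ring_nf
    rw [mul_pow] at h1
    rw [hC₀]
    rw [neg_mul, Real.exp_neg]
    rw [le_div_iff₀ (by positivity)]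
    calc (1+t)^(d+1) * (Real.exp (β*t))⁻¹ * β^(d+1)
        = (β^(d+1) * (1+t)^(d+1) / (d+1).factorial) * (d+1).factorial * (Real.exp (β*t))⁻¹ := by
          field_simp
      _ ≤ Real.exp β * Real.exp (β*t) * (d+1).factorial * (Real.exp (β*t))⁻¹ := by
          gcongr
          rw [← h2]
          exact h1
      _ = (d+1).factorial * Real.exp β := by
          field_simp
  rw [norm_of_nonneg (Real.exp_pos _).le, hpow]
  have he : C₀ * (1/(1+t)^(d+1)) = C₀ / (1+t)^(d+1) := by ring
  rw [he, le_div_iff₀ (by positivity)]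
  calc Real.exp (-β * t) * (1+t)^(d+1) = (1+t)^(d+1) * Real.exp (-β * t) := by ring
    _ ≤ C₀ := key

lemma vec_nontrivial (d : ℕ) (hd : 1 ≤ d) : Nontrivial (Vec d) := by
  refine nontrivial_of_ne (EuclideanSpace.single ⟨0, hd⟩ 1) 0 ?_
  intro h
  have := congrArg (fun v : Vec d => v ⟨0, hd⟩) h
  simp [EuclideanSpace.single_apply] at this

lemma lap_univ_eq (d : ℕ) (hd : 1 ≤ d) (hβ : 0 < β) :
    laplaceLike d β univ
      = ENNReal.ofReal ((d : ℝ) * (volume (Metric.ball (0:Vec d) 1)).toReal *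
          ∫ r in Ioi (0:ℝ), r ^ (d-1) * Real.exp (-β * r)) := by
  haveI := vec_nontrivial d hd
  simp only [laplaceLike]
  rw [withDensity_apply _ MeasurableSet.univ, Measure.restrict_univ]
  rw [← ofReal_integral_eq_lintegral_ofReal (intG d hβ)
    (Filter.Eventually.of_forall fun x => (Real.exp_pos _).le)]
  congr 1
  rw [integral_fun_norm_addHaar (volume : Measure (Vec d)) (fun r => Real.exp (-β * r))]
  rw [finrank_euclideanSpace_fin, nsmul_eq_mul, smul_eq_mul]
  rw [mul_assoc]
  congr 2

lemma lap_tail_eq (d : ℕ) (hd : 1 ≤ d) (hβ : 0 < β) {t₀ : ℝ} (ht₀ : 0 ≤ t₀) :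
    laplaceLike d β {b : Vec d | t₀ < ‖b‖}
      = ENNReal.ofReal ((d : ℝ) * (volume (Metric.ball (0:Vec d) 1)).toReal *
          ∫ r in Ioi t₀, r ^ (d-1) * Real.exp (-β * r)) := by
  haveI := vec_nontrivial d hd
  have hA : MeasurableSet {b : Vec d | t₀ < ‖b‖} :=
    (isOpen_lt continuous_const continuous_norm).measurableSet
  simp only [laplaceLike]
  rw [withDensity_apply _ hA]
  rw [← ofReal_integral_eq_lintegral_ofReal ((intG d hβ).integrableOn)
    (Filter.Eventually.of_forall fun x => (Real.exp_pos _).le)]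
  congr 1
  rw [← integral_indicator hA]
  have hptw : ∀ b : Vec d, ({b : Vec d | t₀ < ‖b‖}).indicator
      (fun b => Real.exp (-β * ‖b‖)) b
      = (Ioi t₀).indicator (fun r => Real.exp (-β * r)) ‖b‖ := by
    intro b
    by_cases h : t₀ < ‖b‖ <;>
      simp [Set.indicator_apply, mem_Ioi, h, mem_setOf_eq]
  rw [integral_congr_ae (Filter.Eventually.of_forall hptw)]
  rw [integral_fun_norm_addHaar (volume : Measure (Vec d))
    ((Ioi t₀).indicator (fun r => Real.exp (-β * r)))]
  rw [finrank_euclideanSpace_fin, nsmul_eq_mul, smul_eq_mul, mul_assoc]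
  congr 2
  have h2 : ∀ y ∈ Ioi (0:ℝ), y ^ (d-1) • (Ioi t₀).indicator (fun r => Real.exp (-β * r)) y
      = (Ioi t₀).indicator (fun r => r ^ (d-1) * Real.exp (-β * r)) y := by
    intro y _
    by_cases h : y ∈ Ioi t₀ <;>
      simp [Set.indicator_apply, h]
  rw [setIntegral_congr_fun measurableSet_Ioi h2]
  rw [setIntegral_indicator measurableSet_Ioi]
  rw [Ioi_inter_Ioi, max_eq_right ht₀]


lemma smooth_bound
    (d n : ℕ) (hn : 0 < n) (Λ η c : ℝ) (hΛ : 0 ≤ Λ) (hη : 0 ≤ η) (hc : 0 ≤ c)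
    (ℓ : ℝ → ℝ) (N : Vec d → ℝ)
    (hNdiff : Differentiable ℝ N) (hNdiff2 : Differentiable ℝ (fderiv ℝ N))
    (hHess : ∀ f : Vec d, ‖fderiv ℝ (fderiv ℝ N) f‖ ≤ η)
    (hℓdiff : Differentiable ℝ ℓ) (hℓcont : Continuous (deriv ℓ))
    (hℓLip : ∀ z₁ z₂ : ℝ, |deriv ℓ z₁ - deriv ℓ z₂| ≤ c * |z₁ - z₂|)
    (D : Dataset d n) (hD : ValidDataset D)
    (fstar : Vec d) (hfstar : ∀ g : Vec d, J ℓ N Λ D fstar ≤ J ℓ N Λ D g)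
    (b : Vec d) :
    J ℓ N Λ D (fstar + b) ≤ J ℓ N Λ D fstar + (c + Λ*η)/2 * ‖b‖^2 := by
  set ψ : ℝ → ℝ := fun t => (1 / (n : ℝ)) * ∑ i, ℓ ((D i).2 *
      ((inner ℝ fstar (D i).1 : ℝ) + t * (inner ℝ b (D i).1 : ℝ))) + Λ * N (fstar + t • b) with hψ
  set ψ' : ℝ → ℝ := fun t => (1 / (n : ℝ)) * ∑ i, deriv ℓ ((D i).2 *
      ((inner ℝ fstar (D i).1 : ℝ) + t * (inner ℝ b (D i).1 : ℝ)))
        * ((D i).2 * (inner ℝ b (D i).1 : ℝ))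
      + Λ * (fderiv ℝ N (fstar + t • b) b) with hψ'
  have hJeq : ∀ t : ℝ, J ℓ N Λ D (fstar + t • b) = ψ t := by
    intro t
    simp only [J, hψ]
    congr 2
    apply Finset.sum_congr rfl
    intro i _
    congr 2
    rw [inner_add_left, real_inner_smul_left]
  have hJ1 : J ℓ N Λ D (fstar + b) = ψ 1 := by
    have := hJeq 1; rwa [one_smul] at this
  have hJ0 : J ℓ N Λ D fstar = ψ 0 := by
    have := hJeq 0; rwa [zero_smul, add_zero] at this
  have hψd : ∀ t : ℝ, HasDerivAt ψ (ψ' t) t := by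
    intro t
    have hsum : HasDerivAt (fun s : ℝ => ∑ i, ℓ ((D i).2 *
        ((inner ℝ fstar (D i).1 : ℝ) + s * (inner ℝ b (D i).1 : ℝ))))
        (∑ i, deriv ℓ ((D i).2 * ((inner ℝ fstar (D i).1 : ℝ) + t * (inner ℝ b (D i).1 : ℝ)))
          * ((D i).2 * (inner ℝ b (D i).1 : ℝ))) t := by
      apply HasDerivAt.fun_sum
      intro i _
      have hlin : HasDerivAt (fun s : ℝ => (D i).2 *
          ((inner ℝ fstar (D i).1 : ℝ) + s * (inner ℝ b (D i).1 : ℝ)))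
          ((D i).2 * (inner ℝ b (D i).1 : ℝ)) t := by
        simpa using (((hasDerivAt_id t).mul_const ((inner ℝ b (D i).1 : ℝ))).const_add
          ((inner ℝ fstar (D i).1 : ℝ))).const_mul ((D i).2)
      exact (hℓdiff _).hasDerivAt.comp t hlin
    have hline : HasDerivAt (fun s : ℝ => fstar + s • b) b t := by
      simpa using ((hasDerivAt_id t).smul_const b).const_add fstar
    have hN : HasDerivAt (fun s : ℝ => N (fstar + s • b))
        (fderiv ℝ N (fstar + t • b) b) t := (hNdiff _).hasFDerivAt.comp_hasDerivAt t hline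
    exact (hsum.const_mul (1 / (n:ℝ))).add (hN.const_mul Λ)
  have hmin : IsLocalMin ψ 0 := by
    apply Filter.Eventually.of_forall
    intro t
    rw [← hJeq t, ← hJ0]
    exact hfstar _
  have hd0 : ψ' 0 = 0 := hmin.hasDerivAt_eq_zero (hψd 0)
  have hy : ∀ i, |(D i).2| = 1 := by
    intro i; rcases (hD i).2 with h | h <;> simp [h]
  have hC : ∀ i, |(inner ℝ b (D i).1 : ℝ)| ≤ ‖b‖ := by
    intro i
    refine (abs_real_inner_le_norm _ _).trans ?_
    have h1 := (hD i).1
    nlinarith [norm_nonneg b]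
  have hLipN : ∀ u v : Vec d, ‖fderiv ℝ N u - fderiv ℝ N v‖ ≤ η * ‖u - v‖ := by
    intro u v
    exact Convex.norm_image_sub_le_of_norm_fderiv_le (fun x _ => hNdiff2 x)
      (fun x _ => hHess x) convex_univ (mem_univ v) (mem_univ u)
  have hψ'le : ∀ t ∈ Icc (0:ℝ) 1, ψ' t ≤ (c + Λ*η) * ‖b‖^2 * t := by
    intro t ht
    obtain ⟨ht0, ht1⟩ := ht
    have key : ψ' t - ψ' 0 ≤ (c + Λ*η) * ‖b‖^2 * t := by
      have hsplit : ψ' t - ψ' 0 = (1 / (n : ℝ)) * ∑ i,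
          (deriv ℓ ((D i).2 * ((inner ℝ fstar (D i).1 : ℝ) + t * (inner ℝ b (D i).1 : ℝ)))
            * ((D i).2 * (inner ℝ b (D i).1 : ℝ))
          - deriv ℓ ((D i).2 * ((inner ℝ fstar (D i).1 : ℝ) + 0 * (inner ℝ b (D i).1 : ℝ)))
            * ((D i).2 * (inner ℝ b (D i).1 : ℝ)))
          + Λ * (fderiv ℝ N (fstar + t • b) b - fderiv ℝ N (fstar + (0:ℝ) • b) b) := by
        simp only [hψ']
        rw [Finset.sum_sub_distrib]
        ring
      have hterm : ∀ i : Fin n,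
          deriv ℓ ((D i).2 * ((inner ℝ fstar (D i).1 : ℝ) + t * (inner ℝ b (D i).1 : ℝ)))
            * ((D i).2 * (inner ℝ b (D i).1 : ℝ))
          - deriv ℓ ((D i).2 * ((inner ℝ fstar (D i).1 : ℝ) + 0 * (inner ℝ b (D i).1 : ℝ)))
            * ((D i).2 * (inner ℝ b (D i).1 : ℝ)) ≤ c * ‖b‖^2 * t := by
        intro i
        set y := (D i).2
        set A := (inner ℝ fstar (D i).1 : ℝ)
        set C := (inner ℝ b (D i).1 : ℝ)
        have h1 : deriv ℓ (y * (A + t * C)) * (y * C) - deriv ℓ (y * (A + 0 * C)) * (y * C)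
            = (deriv ℓ (y * (A + t * C)) - deriv ℓ (y * (A + 0 * C))) * (y * C) := by ring
        rw [h1]
        refine le_trans (le_abs_self _) ?_
        rw [abs_mul, abs_mul]
        have h2 : |deriv ℓ (y * (A + t * C)) - deriv ℓ (y * (A + 0 * C))|
            ≤ c * (|y| * (t * |C|)) := by
          refine (hℓLip _ _).trans ?_
          have : y * (A + t * C) - y * (A + 0 * C) = y * (t * C) := by ring
          rw [this, abs_mul, abs_mul, abs_of_nonneg ht0]
        calc |deriv ℓ (y * (A + t * C)) - deriv ℓ (y * (A + 0 * C))| * (|y| * |C|)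
            ≤ (c * (|y| * (t * |C|))) * (|y| * |C|) := by
              apply mul_le_mul_of_nonneg_right h2 (by positivity)
          _ = c * t * (|C| * |C|) * (|y| * |y|) := by ring
          _ ≤ c * t * (‖b‖ * ‖b‖) * 1 := by
              rw [hy i]
              have hCb : |C| ≤ ‖b‖ := hC i
              have habs : (0:ℝ) ≤ |C| := abs_nonneg _
              have h6 : |C| * |C| ≤ ‖b‖ * ‖b‖ := mul_le_mul hCb hCb habs (norm_nonneg b)
              have h7 : (0:ℝ) ≤ c * t := mul_nonneg hc ht0
              nlinarith [h6, h7]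
          _ = c * ‖b‖^2 * t := by ring
      have hNterm : Λ * (fderiv ℝ N (fstar + t • b) b - fderiv ℝ N (fstar + (0:ℝ) • b) b)
          ≤ Λ * (η * ‖b‖^2 * t) := by
        apply mul_le_mul_of_nonneg_left _ hΛ
        have h3 : fderiv ℝ N (fstar + t • b) b - fderiv ℝ N (fstar + (0:ℝ) • b) b
            = (fderiv ℝ N (fstar + t • b) - fderiv ℝ N (fstar + (0:ℝ) • b)) b := by
          simp
        rw [h3]
        refine le_trans (le_abs_self _) ?_
        rw [← Real.norm_eq_abs]
        refine ((fderiv ℝ N (fstar + t • b) - fderiv ℝ N (fstar + (0:ℝ) • b)).le_opNorm b).trans ?_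
        have h4 : ‖fderiv ℝ N (fstar + t • b) - fderiv ℝ N (fstar + (0:ℝ) • b)‖
            ≤ η * (t * ‖b‖) := by
          refine (hLipN _ _).trans ?_
          have h5 : (fstar + t • b) - (fstar + (0:ℝ) • b) = t • b := by
            simp
          rw [h5, norm_smul, Real.norm_eq_abs, abs_of_nonneg ht0]
        calc ‖fderiv ℝ N (fstar + t • b) - fderiv ℝ N (fstar + (0:ℝ) • b)‖ * ‖b‖
            ≤ (η * (t * ‖b‖)) * ‖b‖ := by
              apply mul_le_mul_of_nonneg_right h4 (norm_nonneg b)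
          _ = η * ‖b‖^2 * t := by ring
      rw [hsplit]
      have hsum_le : ∑ i, (deriv ℓ ((D i).2 * ((inner ℝ fstar (D i).1 : ℝ)
            + t * (inner ℝ b (D i).1 : ℝ))) * ((D i).2 * (inner ℝ b (D i).1 : ℝ))
          - deriv ℓ ((D i).2 * ((inner ℝ fstar (D i).1 : ℝ) + 0 * (inner ℝ b (D i).1 : ℝ)))
            * ((D i).2 * (inner ℝ b (D i).1 : ℝ)))
          ≤ (n : ℝ) * (c * ‖b‖^2 * t) := by
        refine (Finset.sum_le_card_nsmul _ _ _ (fun i _ => hterm i)).trans ?_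
        simp [nsmul_eq_mul]
      have hn' : (0:ℝ) < (n:ℝ) := by exact_mod_cast hn
      calc (1 / (n : ℝ)) * ∑ i, _ + Λ * (fderiv ℝ N (fstar + t • b) b
            - fderiv ℝ N (fstar + (0:ℝ) • b) b)
          ≤ (1 / (n : ℝ)) * ((n : ℝ) * (c * ‖b‖^2 * t)) + Λ * (η * ‖b‖^2 * t) := by
            apply add_le_add _ hNterm
            apply mul_le_mul_of_nonneg_left hsum_le (by positivity)
        _ = (c + Λ*η) * ‖b‖^2 * t := by
            field_simp
    calc ψ' t = ψ' t - ψ' 0 := by rw [hd0, sub_zero]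
      _ ≤ (c + Λ*η) * ‖b‖^2 * t := key
  have hcont : Continuous ψ' := by
    have h1 : Continuous (fun t : ℝ => ∑ i, deriv ℓ ((D i).2 *
        ((inner ℝ fstar (D i).1 : ℝ) + t * (inner ℝ b (D i).1 : ℝ)))
          * ((D i).2 * (inner ℝ b (D i).1 : ℝ))) := by
      apply continuous_finset_sum
      intro i _
      exact (hℓcont.comp (continuous_const.mul (continuous_const.add
        (continuous_id.mul continuous_const)))).mul continuous_const
    have h2 : Continuous (fun t : ℝ => fderiv ℝ N (fstar + t • b) b) := by
      exact (hNdiff2.continuous.comp (continuous_const.add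
        (continuous_id.smul continuous_const))).clm_apply continuous_const
    exact (continuous_const.mul h1).add (continuous_const.mul h2)
  have hftc : ψ 1 - ψ 0 = ∫ t in (0:ℝ)..1, ψ' t :=
    (intervalIntegral.integral_eq_sub_of_hasDerivAt (fun t _ => hψd t)
      (hcont.intervalIntegrable 0 1)).symm
  have hbound : ∫ t in (0:ℝ)..1, ψ' t ≤ ∫ t in (0:ℝ)..1, (c + Λ*η) * ‖b‖^2 * t := by
    apply intervalIntegral.integral_mono_on zero_le_one (hcont.intervalIntegrable 0 1)
      ((continuous_const.mul continuous_id : Continuous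
        (fun t : ℝ => (c + Λ*η) * ‖b‖^2 * t)).intervalIntegrable 0 1)
    exact hψ'le
  have hval : ∫ t in (0:ℝ)..1, (c + Λ*η) * ‖b‖^2 * t = (c + Λ*η)/2 * ‖b‖^2 := by
    rw [intervalIntegral.integral_const_mul, integral_id]
    ring
  rw [hJ1, hJ0]
  have := hftc.le.trans (hbound.trans hval.le)
  linarith

lemma vol0_univ : (volume (univ : Set (EuclideanSpace ℝ (Fin 0)))) = 1 := by
  rw [← ((EuclideanSpace.volume_preserving_symm_measurableEquiv_toLp (Fin 0)).symm).measure_preimage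
    MeasurableSet.univ.nullMeasurableSet]
  rw [Set.preimage_univ]
  rw [volume_pi, Measure.pi_univ]
  simp

end OPAux

/-- Lemma 16: if N is twice differentiable with Hessian operator norm
at most η and ℓ is differentiable with continuous c-Lipschitz derivative, then with
probability ≥ 1 − δ over the noise b (density ∝ e^{-(nΛε_p/2)‖b‖}), the output
f_priv = f* + b of Algorithm 1 satisfies
J(f_priv, D) ≤ J(f*, D) + 2d²(c + Λη)log²(d/δ)/(Λ²n²ε_p²). -/
theorem output_perturbation_training_error
    (d n : ℕ) (hn : 0 < n) (Λ εp η c δ : ℝ)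
    (hΛ : 0 < Λ) (hεp : 0 < εp) (hη : 0 ≤ η) (hc : 0 ≤ c) (hδ : δ ∈ Set.Ioo (0:ℝ) 1)
    (ℓ : ℝ → ℝ) (N : Vec d → ℝ)
    (hNdiff : Differentiable ℝ N) (hNdiff2 : Differentiable ℝ (fderiv ℝ N))
    (hHess : ∀ f : Vec d, ‖fderiv ℝ (fderiv ℝ N) f‖ ≤ η)
    (hℓdiff : Differentiable ℝ ℓ) (hℓcont : Continuous (deriv ℓ))
    (hℓLip : ∀ z₁ z₂ : ℝ, |deriv ℓ z₁ - deriv ℓ z₂| ≤ c * |z₁ - z₂|)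
    (D : Dataset d n) (hD : ValidDataset D)
    (fstar : Vec d) (hfstar : ∀ g : Vec d, J ℓ N Λ D fstar ≤ J ℓ N Λ D g) :
    ENNReal.ofReal (1 - δ) ≤
      noiseP d ((n : ℝ) * Λ * εp / 2)
        {b : Vec d | J ℓ N Λ D (fstar + b) ≤ J ℓ N Λ D fstar +
          2 * (d : ℝ) ^ 2 * (c + Λ * η) * Real.log ((d : ℝ) / δ) ^ 2 /
            (Λ ^ 2 * (n : ℝ) ^ 2 * εp ^ 2)} := by
  have hδ0 : (0:ℝ) < δ := hδ.1
  have hδ1 : δ < 1 := hδ.2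
  have hn' : (0:ℝ) < n := by exact_mod_cast hn
  set β : ℝ := (n : ℝ) * Λ * εp / 2 with hβdef
  have hβ : 0 < β := by rw [hβdef]; positivity
  rcases Nat.eq_zero_or_pos d with hd0 | hd1
  · subst hd0
    have hSuniv : {b : Vec 0 | J ℓ N Λ D (fstar + b) ≤ J ℓ N Λ D fstar +
        2 * (0:ℕ) ^ 2 * (c + Λ * η) * Real.log ((0:ℕ) / δ) ^ 2 /
          (Λ ^ 2 * (n : ℝ) ^ 2 * εp ^ 2)} = univ := by
      apply eq_univ_of_forall
      intro b
      have hb : b = 0 := Subsingleton.elim b 0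
      simp only [mem_setOf_eq, hb, add_zero]
      have h0 : (2:ℝ) * (0:ℕ) ^ 2 * (c + Λ * η) * Real.log ((0:ℕ) / δ) ^ 2 /
          (Λ ^ 2 * (n : ℝ) ^ 2 * εp ^ 2) = 0 := by norm_num
      rw [h0, add_zero]
    rw [hSuniv]
    have hvol : laplaceLike 0 β univ = 1 := by
      simp only [laplaceLike]
      rw [withDensity_apply _ MeasurableSet.univ, Measure.restrict_univ]
      have h1 : ∀ b : Vec 0, ENNReal.ofReal (Real.exp (-β * ‖b‖)) = 1 := by
        intro b
        rw [Subsingleton.elim b (0 : Vec 0)]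
        simp
      rw [lintegral_congr h1, lintegral_one, vol0_univ]
    simp only [noiseP, hvol, Measure.smul_apply, smul_eq_mul, inv_one, one_mul]
    exact ENNReal.ofReal_le_one.mpr (by linarith)
  · set L : ℝ := Real.log ((d:ℝ)/δ) with hLdef
    have hdR : (1:ℝ) ≤ (d:ℝ) := by exact_mod_cast hd1
    have hratio : 1 < (d:ℝ)/δ := by
      rw [lt_div_iff₀ hδ0]
      nlinarith
    have hL0 : 0 < L := Real.log_pos hratio
    set t₀ : ℝ := (d:ℝ) * L / β with ht₀def
    have ht₀ : 0 ≤ t₀ := by positivity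
    have hsubset : {b : Vec d | ‖b‖ ≤ t₀} ⊆ {b : Vec d | J ℓ N Λ D (fstar + b) ≤
        J ℓ N Λ D fstar + 2 * (d:ℝ) ^ 2 * (c + Λ * η) * L ^ 2 /
          (Λ ^ 2 * (n : ℝ) ^ 2 * εp ^ 2)} := by
      intro b hb
      have hbn : ‖b‖ ≤ t₀ := hb
      simp only [mem_setOf_eq]
      have h1 := smooth_bound d n hn Λ η c hΛ.le hη hc ℓ N hNdiff hNdiff2 hHess
        hℓdiff hℓcont hℓLip D hD fstar hfstar b
      refine h1.trans ?_
      have h2 : ‖b‖^2 ≤ t₀^2 := by nlinarith [norm_nonneg b]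
      have h3 : (c + Λ*η)/2 * ‖b‖^2 ≤ (c + Λ*η)/2 * t₀^2 := by
        apply mul_le_mul_of_nonneg_left h2
        positivity
      have h4 : (c + Λ*η)/2 * t₀^2 = 2 * (d:ℝ) ^ 2 * (c + Λ * η) * L ^ 2 /
          (Λ ^ 2 * (n : ℝ) ^ 2 * εp ^ 2) := by
        rw [ht₀def, hβdef]
        field_simp
      linarith
    -- tail integral bound
    have hdpow : (d-1) + 1 = d := Nat.succ_pred_eq_of_pos hd1
    have hd1' : ((d-1:ℕ):ℝ) + 1 = (d:ℝ) := by
      rw [Nat.cast_sub hd1]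
      push_cast
      ring
    have hβt₀ : β * t₀ = (d:ℝ) * L := by
      rw [ht₀def]
      field_simp
    have hexp : Real.exp (-β * t₀ / (d:ℝ)) = δ / (d:ℝ) := by
      have he1 : -β * t₀ / (d:ℝ) = -L := by
        rw [neg_mul, hβt₀]
        field_simp
      rw [he1, Real.exp_neg, hLdef, Real.exp_log (by positivity), inv_div]
    have hig := ig_tail hβ (d-1) t₀ ht₀
    rw [hdpow, hd1', hexp] at hig
    have hI0 := ig_zero hβ (d-1)
    rw [hdpow] at hI0
    have htail_le : ∫ r in Ioi t₀, r^(d-1) * Real.exp (-β*r)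
        ≤ δ * ∫ r in Ioi (0:ℝ), r^(d-1) * Real.exp (-β*r) := by
      refine hig.trans ?_
      rw [hI0]
      apply le_of_eq
      have hdne : (d:ℝ) ≠ 0 := by positivity
      field_simp
    -- measures
    have hCd : 0 < (d:ℝ) * (volume (Metric.ball (0:Vec d) 1)).toReal := by
      apply mul_pos (by exact_mod_cast hd1)
      exact ENNReal.toReal_pos (Metric.measure_ball_pos volume 0 one_pos).ne' measure_ball_lt_top.ne
    have hI0pos : 0 < ∫ r in Ioi (0:ℝ), r^(d-1) * Real.exp (-β*r) := by
      rw [hI0]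
      positivity
    have hU := lap_univ_eq (β := β) d hd1 hβ
    have hTeq := lap_tail_eq (β := β) d hd1 hβ ht₀
    have hμtail : laplaceLike d β {b : Vec d | t₀ < ‖b‖}
        ≤ ENNReal.ofReal δ * laplaceLike d β univ := by
      rw [hTeq, hU, ← ENNReal.ofReal_mul hδ0.le]
      apply ENNReal.ofReal_le_ofReal
      calc (d:ℝ) * (volume (Metric.ball (0:Vec d) 1)).toReal *
            ∫ r in Ioi t₀, r^(d-1) * Real.exp (-β*r)
          ≤ (d:ℝ) * (volume (Metric.ball (0:Vec d) 1)).toReal *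
            (δ * ∫ r in Ioi (0:ℝ), r^(d-1) * Real.exp (-β*r)) := by
            apply mul_le_mul_of_nonneg_left htail_le hCd.le
        _ = δ * ((d:ℝ) * (volume (Metric.ball (0:Vec d) 1)).toReal *
            ∫ r in Ioi (0:ℝ), r^(d-1) * Real.exp (-β*r)) := by ring
    have hUpos : laplaceLike d β univ ≠ 0 := by
      rw [hU]
      simp only [ne_eq, ENNReal.ofReal_eq_zero, not_le]
      exact mul_pos hCd hI0pos
    have hUfin : laplaceLike d β univ ≠ ⊤ := by
      rw [hU]
      exact ENNReal.ofReal_ne_top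
    have htailfin : laplaceLike d β {b : Vec d | t₀ < ‖b‖} ≠ ⊤ :=
      ((measure_mono (subset_univ _)).trans_lt (lt_of_le_of_ne le_top hUfin)).ne
    have hcompl : {b : Vec d | ‖b‖ ≤ t₀} = {b : Vec d | t₀ < ‖b‖}ᶜ := by
      ext b
      simp [not_lt]
    have hball : laplaceLike d β {b : Vec d | ‖b‖ ≤ t₀}
        = laplaceLike d β univ - laplaceLike d β {b : Vec d | t₀ < ‖b‖} := by
      rw [hcompl, measure_compl (isOpen_lt continuous_const continuous_norm).measurableSet
        htailfin]
    have hSle : laplaceLike d β univ - ENNReal.ofReal δ * laplaceLike d β univ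
        ≤ laplaceLike d β {b : Vec d | J ℓ N Λ D (fstar + b) ≤
          J ℓ N Λ D fstar + 2 * (d:ℝ) ^ 2 * (c + Λ * η) * L ^ 2 /
            (Λ ^ 2 * (n : ℝ) ^ 2 * εp ^ 2)} := by
      calc laplaceLike d β univ - ENNReal.ofReal δ * laplaceLike d β univ
          ≤ laplaceLike d β univ - laplaceLike d β {b : Vec d | t₀ < ‖b‖} :=
            tsub_le_tsub_left hμtail _
        _ = laplaceLike d β {b : Vec d | ‖b‖ ≤ t₀} := hball.symm
        _ ≤ _ := measure_mono hsubset
    simp only [noiseP, Measure.smul_apply, smul_eq_mul]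
    calc ENNReal.ofReal (1-δ)
        = 1 - ENNReal.ofReal δ := by
          rw [ENNReal.ofReal_sub 1 hδ0.le, ENNReal.ofReal_one]
      _ = (1 - ENNReal.ofReal δ) * ((laplaceLike d β univ)⁻¹ * laplaceLike d β univ) := by
          rw [ENNReal.inv_mul_cancel hUpos hUfin, mul_one]
      _ = (laplaceLike d β univ)⁻¹ * ((1 - ENNReal.ofReal δ) * laplaceLike d β univ) := by
          ring
      _ = (laplaceLike d β univ)⁻¹ *
          (laplaceLike d β univ - ENNReal.ofReal δ * laplaceLike d β univ) := by
          rw [ENNReal.sub_mul (fun _ _ => hUfin), one_mul]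
      _ ≤ _ := mul_le_mul_right hSle _
end
end

section
/- Let k be a positive integer, θ > 0, and let X be a random variable with the Gamma(k, θ) distribution (shape k, scale θ). Then for any δ ∈ (0,1), ℙ(X < kθ log(k/δ)) ≥ 1 − δ. -/
open MeasureTheory ProbabilityTheory Real

noncomputable section

/-- Auxiliary: `(n+1)^n ≤ e^n * n!`. -/
lemma aux_pow_le_exp_factorial : ∀ n : ℕ, ((n : ℝ) + 1) ^ n ≤ Real.exp 1 ^ n * (n.factorial) := by
  intro n
  induction n with
  | zero => simp
  | succ n ih =>
    have hn1 : (0:ℝ) < (n:ℝ) + 1 := by positivity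
    have h1 : ((n:ℝ) + 1 + 1) ^ (n+1) = ((n:ℝ)+1)^(n+1) * (1 + 1/((n:ℝ)+1))^(n+1) := by
      rw [← mul_pow]; congr 1; field_simp
    have h2 : (1 + 1/((n:ℝ)+1))^(n+1) ≤ Real.exp 1 := by
      have hle : 1 + 1/((n:ℝ)+1) ≤ Real.exp (1/((n:ℝ)+1)) := by
        have := Real.add_one_le_exp (1/((n:ℝ)+1)); linarith
      calc (1 + 1/((n:ℝ)+1))^(n+1) ≤ Real.exp (1/((n:ℝ)+1)) ^ (n+1) := by
            apply pow_le_pow_left₀ (by positivity) hle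
        _ = Real.exp (((n+1 : ℕ) : ℝ) * (1/((n:ℝ)+1))) :=
            (Real.exp_nat_mul _ _).symm
        _ = Real.exp 1 := by
            congr 1; push_cast; field_simp
    have h3 : ((n:ℝ)+1)^(n+1) = ((n:ℝ)+1) * ((n:ℝ)+1)^n := by ring
    push_cast
    have hfpos : (0:ℝ) < (n.factorial : ℝ) := by positivity
    have hep : (0:ℝ) < Real.exp 1 ^ n := by positivity
    calc ((n:ℝ) + 1 + 1) ^ (n+1) = ((n:ℝ)+1)^(n+1) * (1 + 1/((n:ℝ)+1))^(n+1) := h1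
      _ ≤ ((n:ℝ)+1)^(n+1) * Real.exp 1 := by
          apply mul_le_mul_of_nonneg_left h2 (by positivity)
      _ = ((n:ℝ)+1) * ((n:ℝ)+1)^n * Real.exp 1 := by rw [h3]
      _ ≤ ((n:ℝ)+1) * (Real.exp 1 ^ n * (n.factorial)) * Real.exp 1 := by
          apply mul_le_mul_of_nonneg_right _ (Real.exp_pos 1).le
          exact mul_le_mul_of_nonneg_left ih hn1.le
      _ = Real.exp 1 ^ (n+1) * ((n+1).factorial) := by
          rw [Nat.factorial_succ]; push_cast; ring
  termination_by n => n

/-- Auxiliary: integral of an exponential over `Ioi`. -/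
lemma aux_integral_exp_neg_mul_Ioi {b : ℝ} (hb : 0 < b) (t : ℝ) :
    ∫ x in Set.Ioi t, Real.exp (-(b * x)) = Real.exp (-(b * t)) / b := by
  have h := integral_comp_mul_left_Ioi (fun y => Real.exp (-y)) t hb
  simp only [smul_eq_mul] at h
  rw [show (fun x => Real.exp (-(b * x))) = (fun x => Real.exp (-(b * x))) from rfl]
  calc ∫ x in Set.Ioi t, Real.exp (-(b * x)) = b⁻¹ * ∫ x in Set.Ioi (b * t), Real.exp (-x) := h
    _ = Real.exp (-(b * t)) / b := by rw [integral_exp_neg_Ioi]; ring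

/-- Lemma 17: if X ~ Gamma(k, θ) with integer shape k and scale θ
(i.e. rate 1/θ), then ℙ(X < kθ log(k/δ)) ≥ 1 − δ for any δ ∈ (0,1). -/
theorem gamma_tail_bound
    (k : ℕ) (hk : 0 < k) (θ δ : ℝ) (hθ : 0 < θ) (hδ : δ ∈ Set.Ioo (0:ℝ) 1) :
    ENNReal.ofReal (1 - δ) ≤
      gammaMeasure (k : ℝ) (1 / θ) {x : ℝ | x < (k : ℝ) * θ * Real.log ((k : ℝ) / δ)} := by
  obtain ⟨hδ0, hδ1⟩ := hδ
  set m : ℕ := k - 1 with hm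
  have hkm : k = m + 1 := (Nat.succ_pred_eq_of_pos hk).symm
  have hk0 : (0:ℝ) < (k:ℝ) := by exact_mod_cast hk
  have hk1 : (1:ℝ) ≤ (k:ℝ) := by exact_mod_cast hk
  have hmc : ((m:ℝ)) = (k:ℝ) - 1 := by rw [hkm]; push_cast; ring
  have hu : 1 < (k:ℝ) / δ := by rw [lt_div_iff₀ hδ0]; linarith
  have hupos : 0 < (k:ℝ) / δ := by linarith
  have hlog : 0 < Real.log ((k:ℝ)/δ) := Real.log_pos hu
  set t : ℝ := (k:ℝ) * θ * Real.log ((k:ℝ)/δ) with htdef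
  have ht : 0 < t := by positivity
  set b : ℝ := 1 / ((k:ℝ) * θ) with hbdef
  have hb : 0 < b := by positivity
  set C : ℝ := (1/θ)^k / (m.factorial : ℝ) * ((k:ℝ) * θ / Real.exp 1)^m with hC
  have hCpos : 0 < C := by
    apply mul_pos (div_pos (by positivity) (by positivity)); positivity
  have hr : (0:ℝ) < 1/θ := by positivity
  have hprob : IsProbabilityMeasure (gammaMeasure (k:ℝ) (1/θ)) :=
    isProbabilityMeasure_gammaMeasure hk0 hr
  -- the set is Iio t
  have hset : {x : ℝ | x < (k : ℝ) * θ * Real.log ((k : ℝ) / δ)} = Set.Iio t := rfl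
  rw [hset]
  -- tail bound
  have hGamma : Real.Gamma (k:ℝ) = (m.factorial : ℝ) := by
    rw [hkm]; push_cast; exact_mod_cast Real.Gamma_nat_eq_factorial m
  -- pointwise bound on the density for x ≥ 0
  have hpoint : ∀ x ∈ Set.Ici t, gammaPDF (k:ℝ) (1/θ) x
      ≤ ENNReal.ofReal (C * Real.exp (-(b * x))) := by
    intro x hx
    have hx0 : (0:ℝ) ≤ x := le_trans ht.le hx
    rw [gammaPDF_of_nonneg hx0]
    apply ENNReal.ofReal_le_ofReal
    have hrpow1 : (1/θ) ^ (k:ℝ) = (1/θ)^k := by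
      rw [← Real.rpow_natCast (1/θ) k]
    have hrpow2 : x ^ ((k:ℝ) - 1) = x ^ m := by
      rw [← hmc, Real.rpow_natCast]
    rw [hrpow1, hrpow2, hGamma]
    -- core inequality : x^m * exp(-(1/θ*x)) ≤ (kθ/e)^m * exp(-(b*x))
    have hkθ : (0:ℝ) < (k:ℝ) * θ := by positivity
    have h1 : x ≤ (k:ℝ) * θ / Real.exp 1 * Real.exp (x / ((k:ℝ)*θ)) := by
      have h0 : x/((k:ℝ)*θ) ≤ Real.exp (x/((k:ℝ)*θ) - 1) := by
        have := Real.add_one_le_exp (x/((k:ℝ)*θ) - 1); linarith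
      rw [Real.exp_sub] at h0
      calc x ≤ Real.exp (x / ((k:ℝ)*θ)) / Real.exp 1 * ((k:ℝ)*θ) :=
            (div_le_iff₀ hkθ).mp h0
        _ = (k:ℝ) * θ / Real.exp 1 * Real.exp (x / ((k:ℝ)*θ)) := by ring
    have h2 : x ^ m ≤ ((k:ℝ) * θ / Real.exp 1)^m * Real.exp ((m:ℝ) * (x / ((k:ℝ)*θ))) := by
      calc x ^ m ≤ ((k:ℝ) * θ / Real.exp 1 * Real.exp (x / ((k:ℝ)*θ)))^m :=
            pow_le_pow_left₀ hx0 h1 m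
        _ = ((k:ℝ) * θ / Real.exp 1)^m * Real.exp ((m:ℝ) * (x / ((k:ℝ)*θ))) := by
            rw [mul_pow, ← Real.exp_nat_mul]
    have hexpeq : Real.exp ((m:ℝ) * (x / ((k:ℝ)*θ))) * Real.exp (-(1/θ * x))
        = Real.exp (-(b * x)) := by
      rw [← Real.exp_add]
      congr 1
      rw [hmc, hbdef]
      field_simp
      ring
    have hnn : (0:ℝ) ≤ (1/θ)^k / (m.factorial : ℝ) := by positivity
    calc (1/θ)^k / (m.factorial : ℝ) * x ^ m * Real.exp (-(1/θ * x))
        ≤ (1/θ)^k / (m.factorial : ℝ) * (((k:ℝ) * θ / Real.exp 1)^m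
            * Real.exp ((m:ℝ) * (x / ((k:ℝ)*θ)))) * Real.exp (-(1/θ * x)) := by
          apply mul_le_mul_of_nonneg_right _ (Real.exp_pos _).le
          exact mul_le_mul_of_nonneg_left h2 hnn
      _ = C * (Real.exp ((m:ℝ) * (x / ((k:ℝ)*θ))) * Real.exp (-(1/θ * x))) := by
          rw [hC]; ring
      _ = C * Real.exp (-(b * x)) := by rw [hexpeq]
  -- tail measure bound
  have htail : gammaMeasure (k:ℝ) (1/θ) (Set.Ici t) ≤ ENNReal.ofReal δ := by
    have hmeas : gammaMeasure (k:ℝ) (1/θ) (Set.Ici t)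
        = ∫⁻ x in Set.Ici t, gammaPDF (k:ℝ) (1/θ) x := by
      rw [gammaMeasure, withDensity_apply _ measurableSet_Ici]
    rw [hmeas]
    have hmono : ∫⁻ x in Set.Ici t, gammaPDF (k:ℝ) (1/θ) x
        ≤ ∫⁻ x in Set.Ici t, ENNReal.ofReal (C * Real.exp (-(b * x))) := by
      apply setLIntegral_mono _ hpoint
      exact (((measurable_id.const_mul b).neg.exp).const_mul C).ennreal_ofReal
    refine hmono.trans ?_
    have hIoi : ∫⁻ x in Set.Ici t, ENNReal.ofReal (C * Real.exp (-(b * x)))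
        = ∫⁻ x in Set.Ioi t, ENNReal.ofReal (C * Real.exp (-(b * x))) :=
      (setLIntegral_congr Ioi_ae_eq_Ici).symm
    rw [hIoi]
    have hInt : IntegrableOn (fun x => C * Real.exp (-(b * x))) (Set.Ioi t) := by
      have := (exp_neg_integrableOn_Ioi t hb).const_mul C
      simpa [neg_mul, IntegrableOn] using this
    rw [← ofReal_integral_eq_lintegral_ofReal hInt
      (Filter.Eventually.of_forall fun x => by positivity)]
    apply ENNReal.ofReal_le_ofReal
    rw [MeasureTheory.integral_const_mul, aux_integral_exp_neg_mul_Ioi hb]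
    -- compute exp(-(b*t)) = δ/k
    have hbt : b * t = Real.log ((k:ℝ)/δ) := by
      rw [hbdef, htdef]; field_simp
    have hexp : Real.exp (-(b * t)) = δ / (k:ℝ) := by
      rw [hbt, Real.exp_neg, Real.exp_log hupos, inv_div]
    rw [hexp]
    -- final algebra : C * ((δ/k)/b) = δ * k^m/(e^m * m!)
    have hfact : (k:ℝ)^m ≤ Real.exp 1 ^ m * (m.factorial) := by
      have := aux_pow_le_exp_factorial m
      rwa [show ((m:ℝ) + 1) = (k:ℝ) by rw [hkm]; push_cast; ring] at this
    have hval : C * (δ / (k:ℝ) / b) = δ * ((k:ℝ)^m / (Real.exp 1 ^ m * (m.factorial))) := by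
      have hθk : θ ^ k = θ ^ m * θ := by rw [hkm, pow_succ]
      have h1 : ((k:ℝ) * θ / Real.exp 1)^m = (k:ℝ)^m * θ^m / Real.exp 1 ^ m := by
        rw [div_pow, mul_pow]
      have h2 : ((1:ℝ)/θ)^k = 1/(θ^m * θ) := by rw [div_pow, one_pow, hθk]
      rw [hC, hbdef, h1, h2]
      field_simp
    rw [hval]
    have : (k:ℝ)^m / (Real.exp 1 ^ m * (m.factorial)) ≤ 1 :=
      div_le_one_of_le₀ hfact (by positivity)
    calc δ * ((k:ℝ)^m / (Real.exp 1 ^ m * (m.factorial))) ≤ δ * 1 :=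
        mul_le_mul_of_nonneg_left this hδ0.le
      _ = δ := mul_one δ
  -- conclude
  have hcompl : Set.Iio t = (Set.Ici t)ᶜ := by simp
  rw [hcompl, measure_compl measurableSet_Ici (measure_ne_top _ _), measure_univ]
  have h1 : ENNReal.ofReal (1 - δ) = 1 - ENNReal.ofReal δ := by
    rw [ENNReal.ofReal_sub 1 hδ0.le, ENNReal.ofReal_one]
  rw [h1]
  exact tsub_le_tsub_left htail 1
end
end

section
/- Suppose ε_p' > 0 in Algorithm 2 (so Δ = 0), N : ℝ^d → ℝ is 1-strongly convex and globally differentiable, and ℓ : ℝ → ℝ is convex and differentiable at all points with |ℓ'(z)| ≤ 1 for all z. Let f* = argmin_f J(f, D) and let f_priv = argmin_f [J(f, D) + (1/n)bᵀf] where b ∈ ℝ^d is the noise vector of Algorithm 2 (with ‖b‖₂ distributed as Gamma(d, 2/ε_p)). Then with probability at least 1 − δ over the draw of b, J(f_priv, D) ≤ J(f*, D) + 4d²log²(d/δ)/(Λ n² ε_p²). -/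
open MeasureTheory Real Set

noncomputable section

lemma myPolyExp (k : ℕ) {t : ℝ} (ht : 0 ≤ t) :
    t ^ k * exp (-t) ≤ (k:ℝ) ^ k * exp (-(k:ℝ)) := by
  rcases Nat.eq_zero_or_pos k with h | h
  · subst h
    simpa using exp_le_one_iff.2 (by linarith : -t ≤ 0)
  · have hk : (0:ℝ) < k := by exact_mod_cast h
    have h1 : t / k ≤ exp (t / k - 1) := by
      have := Real.add_one_le_exp (t / k - 1); linarith
    have h2 : (t / k) ^ k ≤ exp (t / k - 1) ^ k :=
      pow_le_pow_left₀ (by positivity) h1 k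
    have h3 : exp (t / k - 1) ^ k = exp (t - k) := by
      rw [← Real.exp_nat_mul]; congr 1; field_simp
    have h4 : t ^ k ≤ (k:ℝ) ^ k * exp (t - k) := by
      rw [h3, div_pow] at h2
      calc t ^ k = (k:ℝ)^k * (t^k / (k:ℝ)^k) := by field_simp
        _ ≤ (k:ℝ)^k * exp (t - k) := mul_le_mul_of_nonneg_left h2 (by positivity)
    calc t ^ k * exp (-t) ≤ ((k:ℝ)^k * exp (t - k)) * exp (-t) :=
          mul_le_mul_of_nonneg_right h4 (exp_nonneg _)
      _ = (k:ℝ)^k * exp (-(k:ℝ)) := by rw [mul_assoc, ← Real.exp_add]; ring_nf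

lemma myPolyExp' (k : ℕ) {c y : ℝ} (hc : 0 < c) (hy : 0 ≤ y) :
    y ^ k * exp (-(c * y)) ≤ (k:ℝ) ^ k * exp (-(k:ℝ)) / c ^ k := by
  have h := myPolyExp k (t := c * y) (by positivity)
  rw [mul_pow] at h
  rw [le_div_iff₀ (by positivity : (0:ℝ) < c ^ k)]
  calc y ^ k * exp (-(c*y)) * c ^ k = c ^ k * y ^ k * exp (-(c*y)) := by ring
    _ ≤ (k:ℝ) ^ k * exp (-(k:ℝ)) := h

lemma myFactBound (m : ℕ) : ((m:ℝ) + 1) ^ m ≤ exp m * (Nat.factorial m : ℝ) := by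
  induction m with
  | zero => simp
  | succ m ih =>
    have hm1 : (0:ℝ) < (m:ℝ) + 1 := by positivity
    have he : ((m:ℝ) + 2) / ((m:ℝ) + 1) ≤ exp (1 / ((m:ℝ)+1)) := by
      have h := Real.add_one_le_exp (1 / ((m:ℝ)+1))
      rw [div_le_iff₀ hm1]
      calc (m:ℝ) + 2 = (1/((m:ℝ)+1) + 1) * ((m:ℝ)+1) := by field_simp; ring
        _ ≤ exp (1/((m:ℝ)+1)) * ((m:ℝ)+1) := mul_le_mul_of_nonneg_right h hm1.le
    have he2 : (((m:ℝ) + 2) / ((m:ℝ) + 1)) ^ (m+1) ≤ exp 1 := by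
      calc (((m:ℝ) + 2) / ((m:ℝ) + 1)) ^ (m+1) ≤ exp (1/((m:ℝ)+1)) ^ (m+1) :=
            pow_le_pow_left₀ (by positivity) he _
        _ = exp ((1/((m:ℝ)+1)) * (m+1)) := by rw [← Real.exp_nat_mul]; congr 1; push_cast; ring
        _ = exp 1 := by congr 1; field_simp
    have key : ((m:ℝ) + 2) ^ (m+1) = (((m:ℝ)+2)/((m:ℝ)+1))^(m+1) * ((m:ℝ)+1)^(m+1) := by
      rw [div_pow]; field_simp
    have step : ((m:ℝ)+1+1) ^ (m+1) ≤ exp (m+1) * ((m+1) * (Nat.factorial m : ℝ)) := by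
      calc ((m:ℝ)+1+1) ^ (m+1) = (((m:ℝ)+2)/((m:ℝ)+1))^(m+1) * (((m:ℝ)+1)^m * ((m:ℝ)+1)) := by
            rw [show ((m:ℝ)+1+1) = ((m:ℝ)+2) by ring, key, pow_succ]; ring
        _ ≤ exp 1 * ((exp m * (Nat.factorial m : ℝ)) * ((m:ℝ)+1)) := by
            apply mul_le_mul he2 (mul_le_mul_of_nonneg_right ih hm1.le) (by positivity) (exp_nonneg _)
        _ = exp (m+1) * ((m+1) * (Nat.factorial m : ℝ)) := by rw [Real.exp_add]; ring
    have : ((m+1:ℕ):ℝ) + 1 = (m:ℝ) + 1 + 1 := by push_cast; ring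
    rw [this]
    calc ((m:ℝ)+1+1) ^ (m+1) ≤ exp (m+1) * ((m+1) * (Nat.factorial m : ℝ)) := step
      _ = exp ((m+1:ℕ):ℝ) * (Nat.factorial (m+1) : ℝ) := by rw [Nat.factorial_succ]; push_cast; ring

lemma myExpIntegral {c : ℝ} (hc : 0 < c) (R : ℝ) :
    ∫ y in Ioi R, exp (-c * y) = exp (-c * R) / c := by
  have hderiv : ∀ x ∈ Ici R, HasDerivAt (fun y => -(exp (-c * y) / c)) (exp (-c * x)) x := by
    intro x _
    have h1 : HasDerivAt (fun y : ℝ => -c * y) (-c) x := by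
      simpa using (hasDerivAt_id x).const_mul (-c)
    have h2 := (Real.hasDerivAt_exp (-c * x)).comp x h1
    have h3 := (h2.div_const c).neg
    convert h3 using 1
    · rfl
    · rfl
    · funext y; simp [Function.comp]
    · field_simp
  have hint : IntegrableOn (fun y => exp (-c * y)) (Ioi R) := exp_neg_integrableOn_Ioi R hc
  have htend : Filter.Tendsto (fun y => -(exp (-c * y) / c)) Filter.atTop (nhds 0) := by
    have h1 : Filter.Tendsto (fun y : ℝ => -c * y) Filter.atTop Filter.atBot := by
      have := Filter.tendsto_id.const_mul_atTop_of_neg (neg_lt_zero.2 hc)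
      simpa using this
    have h2 := Real.tendsto_exp_atBot.comp h1
    have h3 := h2.div_const c
    simpa using h3.neg
  have := MeasureTheory.integral_Ioi_of_hasDerivAt_of_tendsto' hderiv hint htend
  rw [this]
  ring

lemma myFullIntegral (kk : ℕ) {β : ℝ} (hβ : 0 < β) :
    ∫ y in Ioi (0:ℝ), y ^ kk * exp (-β * y) = (1 / β) ^ (kk + 1) * (Nat.factorial kk) := by
  have h := integral_rpow_mul_exp_neg_mul_Ioi (a := (kk:ℝ) + 1) (by positivity) hβ
  have hL : ∫ t in Ioi (0:ℝ), t ^ ((kk:ℝ) + 1 - 1) * exp (-(β * t)) =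
      ∫ y in Ioi (0:ℝ), y ^ kk * exp (-β * y) := by
    apply setIntegral_congr_fun measurableSet_Ioi
    intro t _
    simp only [show (kk:ℝ) + 1 - 1 = ((kk:ℕ):ℝ) by push_cast; ring, Real.rpow_natCast, neg_mul]
  rw [hL] at h
  rw [h, Real.Gamma_nat_eq_factorial kk]
  rw [show (kk:ℝ) + 1 = ((kk+1:ℕ):ℝ) by push_cast; ring, Real.rpow_natCast]

section tail
variable {d : ℕ} {β : ℝ}

lemma myMBound (hd : 0 < d) (hβ : 0 < β) {y : ℝ} (hy : 0 ≤ y) :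
    y ^ (d-1) * exp (-((β - β/d) * y)) ≤ exp (-((d:ℝ)-1)) * ((d:ℝ)/β) ^ (d-1) := by
  have hd' : (0:ℝ) < d := by exact_mod_cast hd
  rcases Nat.lt_or_ge d 2 with h2 | h2
  · interval_cases d
    simp
  · set kk := d - 1 with hkk
    have hkk1 : 1 ≤ kk := by omega
    have hdkk : (kk:ℝ) = (d:ℝ) - 1 := by
      rw [hkk]; push_cast [Nat.cast_sub (by omega : 1 ≤ d)]; ring
    have hd2 : (2:ℝ) ≤ (d:ℝ) := by exact_mod_cast h2
    have hγ : (0:ℝ) < β - β/d := by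
      rw [sub_pos, div_lt_iff₀ hd']
      nlinarith
    have h := myPolyExp' kk hγ hy
    have hratio : (kk:ℝ) / (β - β/d) = (d:ℝ)/β := by
      rw [div_eq_div_iff hγ.ne' hβ.ne', hdkk]
      field_simp
    calc y ^ kk * exp (-((β - β/d) * y)) ≤ (kk:ℝ)^kk * exp (-(kk:ℝ)) / (β - β/d)^kk := h
      _ = exp (-(kk:ℝ)) * ((kk:ℝ)/(β - β/d))^kk := by rw [div_pow]; ring
      _ = exp (-((d:ℝ)-1)) * ((d:ℝ)/β) ^ kk := by rw [hratio, hdkk]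

lemma myPtwise (hd : 0 < d) (hβ : 0 < β) {y : ℝ} (hy : 0 ≤ y) :
    y ^ (d-1) * exp (-β * y) ≤
      (exp (-((d:ℝ)-1)) * ((d:ℝ)/β) ^ (d-1)) * exp (-(β/d) * y) := by
  have hsplit : exp (-β * y) = exp (-((β - β/d) * y)) * exp (-(β/d) * y) := by
    rw [← Real.exp_add]; congr 1; ring
  rw [hsplit, ← mul_assoc]
  exact mul_le_mul_of_nonneg_right
    (by simpa using myMBound hd hβ hy) (exp_nonneg _)

lemma myIntOn (hd : 0 < d) (hβ : 0 < β) {a : ℝ} (ha : 0 ≤ a) :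
    IntegrableOn (fun y => y ^ (d-1) * exp (-β * y)) (Ioi a) := by
  have hd' : (0:ℝ) < d := by exact_mod_cast hd
  apply Integrable.mono'
    ((exp_neg_integrableOn_Ioi a (div_pos hβ hd')).const_mul
      (exp (-((d:ℝ)-1)) * ((d:ℝ)/β) ^ (d-1)))
  · exact (Continuous.aestronglyMeasurable (by continuity)).restrict
  · filter_upwards [ae_restrict_mem measurableSet_Ioi] with y hy
    have hy0 : (0:ℝ) ≤ y := le_trans ha (le_of_lt hy)
    rw [norm_eq_abs, abs_of_nonneg (by positivity)]
    exact myPtwise hd hβ hy0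

lemma myTailBound (hd : 0 < d) (hβ : 0 < β) {R : ℝ} (hR : 0 ≤ R) :
    ∫ y in Ioi R, y ^ (d-1) * exp (-β * y) ≤
      (exp (-((d:ℝ)-1)) * ((d:ℝ)/β) ^ (d-1)) * (exp (-(β/d) * R) / (β/d)) := by
  have hd' : (0:ℝ) < d := by exact_mod_cast hd
  have hc : 0 < β/(d:ℝ) := div_pos hβ hd'
  have h1 : ∫ y in Ioi R, y ^ (d-1) * exp (-β * y) ≤
      ∫ y in Ioi R, (exp (-((d:ℝ)-1)) * ((d:ℝ)/β) ^ (d-1)) * exp (-(β/d) * y) := by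
    apply setIntegral_mono_on (myIntOn hd hβ hR)
      ((exp_neg_integrableOn_Ioi R hc).const_mul _) measurableSet_Ioi
    intro y hy
    exact myPtwise hd hβ (le_trans hR (le_of_lt hy))
  rw [integral_const_mul, myExpIntegral hc] at h1
  exact h1
end tail

lemma myRatio (d : ℕ) (hd : 0 < d) {β δ : ℝ} (hβ : 0 < β) (hδ0 : 0 < δ) (hδ1 : δ < 1) :
    (exp (-((d:ℝ)-1)) * ((d:ℝ)/β) ^ (d-1)) *
        (exp (-(β/d) * ((d:ℝ) * Real.log ((d:ℝ)/δ) / β)) / (β/d)) ≤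
      δ * ((1/β) ^ ((d-1) + 1) * (Nat.factorial (d-1) : ℝ)) := by
  have hd' : (0:ℝ) < d := by exact_mod_cast hd
  set kk := d - 1 with hkk
  have hdkk : (kk:ℝ) = (d:ℝ) - 1 := by
    rw [hkk]; push_cast [Nat.cast_sub (by omega : 1 ≤ d)]; ring
  have harg : -(β/d) * ((d:ℝ) * Real.log ((d:ℝ)/δ) / β) = -Real.log ((d:ℝ)/δ) := by
    field_simp
  have hexp : exp (-(β/d) * ((d:ℝ) * Real.log ((d:ℝ)/δ) / β)) = δ / (d:ℝ) := by
    rw [harg, Real.exp_neg, Real.exp_log (by positivity), inv_div]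
  rw [hexp]
  have hdd : ((kk:ℝ) + 1) = (d:ℝ) := by rw [hdkk]; ring
  have hcore : exp (-((d:ℝ)-1)) * (d:ℝ) ^ kk ≤ (Nat.factorial kk : ℝ) := by
    have h := myFactBound kk
    rw [hdd] at h
    rw [show -((d:ℝ) - 1) = -(kk:ℝ) by rw [hdkk], Real.exp_neg]
    rw [inv_mul_le_iff₀ (exp_pos _)]
    linarith [h]
  have hform : (exp (-((d:ℝ)-1)) * ((d:ℝ)/β) ^ kk) * ((δ / (d:ℝ)) / (β/d)) =
      (exp (-((d:ℝ)-1)) * (d:ℝ) ^ kk) * (δ / β^(kk+1)) := by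
    rw [div_pow]
    field_simp
    ring
  have hform2 : δ * ((1/β) ^ (kk + 1) * (Nat.factorial kk : ℝ)) =
      (Nat.factorial kk : ℝ) * (δ / β^(kk+1)) := by
    rw [div_pow, one_pow]
    field_simp
  rw [hform, hform2]
  exact mul_le_mul_of_nonneg_right hcore (by positivity)

lemma mySConvexMin {d : ℕ} {lam : ℝ} {H : Vec d → ℝ} (hH : SConvex lam H)
    {f0 : Vec d} (hmin : ∀ g, H f0 ≤ H g) (g : Vec d) :
    H f0 + (lam / 2) * ‖g - f0‖ ^ 2 ≤ H g := by
  have key : ∀ α : ℝ, α ∈ Set.Ioo (0:ℝ) 1 →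
      (lam / 2) * (1 - α) * ‖g - f0‖ ^ 2 ≤ H g - H f0 := by
    intro α hα
    have h := hH α hα g f0
    have h2 := hmin (α • g + (1 - α) • f0)
    have hα0 := hα.1
    exact le_of_mul_le_mul_left (by nlinarith) hα0
  have hlim : Filter.Tendsto (fun α : ℝ => (lam / 2) * (1 - α) * ‖g - f0‖ ^ 2)
      (nhdsWithin 0 (Set.Ioi 0)) (nhds ((lam / 2) * (1 - 0) * ‖g - f0‖ ^ 2)) := by
    apply Filter.Tendsto.mono_left _ nhdsWithin_le_nhds
    exact Continuous.tendsto (by continuity) 0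
  have hev : ∀ᶠ α in nhdsWithin (0:ℝ) (Set.Ioi 0),
      (lam / 2) * (1 - α) * ‖g - f0‖ ^ 2 ≤ H g - H f0 := by
    filter_upwards [Ioo_mem_nhdsGT_of_mem (Set.left_mem_Ico.2 one_pos)] with α hα
    exact key α hα
  have := le_of_tendsto hlim hev
  simpa using by linarith [this]

lemma myJStrong {d n : ℕ} (ℓ : ℝ → ℝ) (N : Vec d → ℝ) (Λ : ℝ) (D : Dataset d n)
    (hΛ : 0 ≤ Λ) (hNsc : SConvex 1 N) (hℓconv : ConvexOn ℝ Set.univ ℓ) :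
    SConvex Λ (J ℓ N Λ D) := by
  intro α hα f g
  obtain ⟨hα0, hα1⟩ := hα
  have hsum : ∑ i, ℓ ((D i).2 * (inner ℝ (α • f + (1 - α) • g) (D i).1 : ℝ)) ≤
      α * ∑ i, ℓ ((D i).2 * (inner ℝ f (D i).1 : ℝ)) +
      (1 - α) * ∑ i, ℓ ((D i).2 * (inner ℝ g (D i).1 : ℝ)) := by
    rw [Finset.mul_sum, Finset.mul_sum, ← Finset.sum_add_distrib]
    apply Finset.sum_le_sum
    intro i _
    have harg : (D i).2 * (inner ℝ (α • f + (1 - α) • g) (D i).1 : ℝ) =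
        α * ((D i).2 * (inner ℝ f (D i).1 : ℝ)) +
        (1 - α) * ((D i).2 * (inner ℝ g (D i).1 : ℝ)) := by
      rw [inner_add_left, real_inner_smul_left, real_inner_smul_left]
      ring
    rw [harg]
    have := hℓconv.2 (Set.mem_univ ((D i).2 * (inner ℝ f (D i).1 : ℝ)))
      (Set.mem_univ ((D i).2 * (inner ℝ g (D i).1 : ℝ))) hα0.le (by linarith : (0:ℝ) ≤ 1 - α)
      (by ring : α + (1 - α) = 1)
    simpa [smul_eq_mul] using this
  have hN := hNsc α ⟨hα0, hα1⟩ f g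
  have hNΛ : Λ * N (α • f + (1 - α) • g) ≤
      Λ * (α * N f + (1 - α) * N g - (1 / 2) * α * (1 - α) * ‖f - g‖ ^ 2) :=
    mul_le_mul_of_nonneg_left (by linarith) hΛ
  have hn0 : (0:ℝ) ≤ 1 / (n : ℝ) := by positivity
  unfold J
  have hsum' := mul_le_mul_of_nonneg_left hsum hn0
  nlinarith [hsum', hNΛ]

lemma myDetBound {d n : ℕ} (hn : 0 < n) {Λ : ℝ} (hΛ : 0 < Λ)
    (ℓ : ℝ → ℝ) (N : Vec d → ℝ) (D : Dataset d n)
    (hNsc : SConvex 1 N) (hℓconv : ConvexOn ℝ Set.univ ℓ)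
    (fstar : Vec d) (hfstar : ∀ g : Vec d, J ℓ N Λ D fstar ≤ J ℓ N Λ D g)
    (fout : Vec d → Vec d)
    (hfout : ∀ b g : Vec d,
      J ℓ N Λ D (fout b) + (1 / (n : ℝ)) * (inner ℝ b (fout b) : ℝ) ≤
        J ℓ N Λ D g + (1 / (n : ℝ)) * (inner ℝ b g : ℝ))
    (b : Vec d) :
    J ℓ N Λ D (fout b) ≤ J ℓ N Λ D fstar + ‖b‖ ^ 2 / (Λ * (n:ℝ) ^ 2) := by
  set fp := fout b with hfp
  have hJs : SConvex Λ (J ℓ N Λ D) := myJStrong ℓ N Λ D hΛ.le hNsc hℓconv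
  have hGs : SConvex Λ (fun f => J ℓ N Λ D f + (1 / (n : ℝ)) * (inner ℝ b f : ℝ)) := by
    intro α hα f g
    have h := hJs α hα f g
    have hlin : (inner ℝ b (α • f + (1 - α) • g) : ℝ) =
        α * (inner ℝ b f : ℝ) + (1 - α) * (inner ℝ b g : ℝ) := by
      rw [inner_add_right, real_inner_smul_right, real_inner_smul_right]
    simp only [hlin]
    nlinarith [h]
  have h1 := mySConvexMin hJs hfstar fp
  have h2 := mySConvexMin hGs (hfout b) fstar
  have hnrm : ‖fstar - fp‖ = ‖fp - fstar‖ := norm_sub_rev _ _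
  set t := ‖fp - fstar‖ with ht
  have ht0 : 0 ≤ t := norm_nonneg _
  have hinner : (inner ℝ b fstar : ℝ) - (inner ℝ b fp : ℝ) = (inner ℝ b (fstar - fp) : ℝ) := by
    rw [inner_sub_right]
  have hCS : (inner ℝ b (fstar - fp) : ℝ) ≤ ‖b‖ * t := by
    calc (inner ℝ b (fstar - fp) : ℝ) ≤ ‖b‖ * ‖fstar - fp‖ := real_inner_le_norm _ _
      _ = ‖b‖ * t := by rw [hnrm]
  have hn0 : (0:ℝ) < (n:ℝ) := by exact_mod_cast hn
  have hkey : Λ * t ^ 2 ≤ (1 / (n:ℝ)) * (‖b‖ * t) := by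
    have : Λ * t ^ 2 ≤ (1 / (n:ℝ)) * ((inner ℝ b fstar : ℝ) - (inner ℝ b fp : ℝ)) := by
      rw [hnrm] at h2
      nlinarith [h1, h2]
    calc Λ * t ^ 2 ≤ (1 / (n:ℝ)) * ((inner ℝ b fstar : ℝ) - (inner ℝ b fp : ℝ)) := this
      _ = (1 / (n:ℝ)) * (inner ℝ b (fstar - fp) : ℝ) := by rw [hinner]
      _ ≤ (1 / (n:ℝ)) * (‖b‖ * t) := by
          apply mul_le_mul_of_nonneg_left hCS (by positivity)
  have hstep : J ℓ N Λ D fp ≤ J ℓ N Λ D fstar + (1 / (n:ℝ)) * (‖b‖ * t) := by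
    have h3 := hfout b fstar
    have : J ℓ N Λ D fp ≤ J ℓ N Λ D fstar +
        (1 / (n:ℝ)) * ((inner ℝ b fstar : ℝ) - (inner ℝ b fp : ℝ)) := by linarith [h3]
    calc J ℓ N Λ D fp ≤ J ℓ N Λ D fstar +
          (1 / (n:ℝ)) * ((inner ℝ b fstar : ℝ) - (inner ℝ b fp : ℝ)) := this
      _ = J ℓ N Λ D fstar + (1 / (n:ℝ)) * (inner ℝ b (fstar - fp) : ℝ) := by rw [hinner]
      _ ≤ J ℓ N Λ D fstar + (1 / (n:ℝ)) * (‖b‖ * t) := by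
          have := mul_le_mul_of_nonneg_left hCS (by positivity : (0:ℝ) ≤ 1/(n:ℝ))
          linarith
  rcases eq_or_lt_of_le ht0 with h0 | h0
  · have : (1 / (n:ℝ)) * (‖b‖ * t) = 0 := by rw [← h0]; ring
    rw [this] at hstep
    have : (0:ℝ) ≤ ‖b‖ ^ 2 / (Λ * (n:ℝ) ^ 2) := by positivity
    linarith
  · have htle : t ≤ ‖b‖ / ((n:ℝ) * Λ) := by
      rw [le_div_iff₀ (by positivity)]
      have := hkey
      have h4 : Λ * t * t ≤ (1 / (n:ℝ)) * ‖b‖ * t := by nlinarith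
      have := le_of_mul_le_mul_right (by nlinarith : Λ * t * t ≤ ((1/(n:ℝ)) * ‖b‖) * t) h0
      calc t * ((n:ℝ) * Λ) = (Λ * t) * (n:ℝ) := by ring
        _ ≤ ((1/(n:ℝ)) * ‖b‖) * (n:ℝ) := by
            apply mul_le_mul_of_nonneg_right this hn0.le
        _ = ‖b‖ := by field_simp
    calc J ℓ N Λ D fp ≤ J ℓ N Λ D fstar + (1 / (n:ℝ)) * (‖b‖ * t) := hstep
      _ ≤ J ℓ N Λ D fstar + (1 / (n:ℝ)) * (‖b‖ * (‖b‖ / ((n:ℝ) * Λ))) := by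
          have : ‖b‖ * t ≤ ‖b‖ * (‖b‖ / ((n:ℝ) * Λ)) :=
            mul_le_mul_of_nonneg_left htle (norm_nonneg _)
          have := mul_le_mul_of_nonneg_left this (by positivity : (0:ℝ) ≤ 1/(n:ℝ))
          linarith
      _ = J ℓ N Λ D fstar + ‖b‖ ^ 2 / (Λ * (n:ℝ) ^ 2) := by
          field_simp

lemma myIntegrableExp (d : ℕ) {β : ℝ} (hβ : 0 < β) :
    Integrable (fun x : Vec d => exp (-β * ‖x‖)) := by
  have hfr : ((Module.finrank ℝ (Vec d) : ℕ) : ℝ) < (d:ℝ) + 1 := by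
    rw [finrank_euclideanSpace_fin]
    linarith
  have hbase := integrable_one_add_norm (E := Vec d) (μ := volume) hfr
  set C := exp β * (((d+1:ℕ):ℝ)^(d+1) * exp (-((d+1:ℕ):ℝ)) / β^(d+1)) with hC
  apply Integrable.mono' (hbase.const_mul C)
  · exact Continuous.aestronglyMeasurable (by continuity)
  · refine ae_of_all _ fun x => ?_
    set t := ‖x‖ with hdef
    have ht : 0 ≤ t := norm_nonneg _
    have hs : (0:ℝ) < 1 + t := by linarith
    have hrpow : (1 + t) ^ (-((d:ℝ)+1)) = ((1 + t)^(d+1:ℕ))⁻¹ := by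
      rw [Real.rpow_neg hs.le]
      congr 1
      rw [show ((d:ℝ)+1) = ((d+1:ℕ):ℝ) by push_cast; ring, Real.rpow_natCast]
    rw [norm_eq_abs, abs_of_nonneg (exp_nonneg _), hrpow]
    rw [show C * ((1+t)^(d+1:ℕ))⁻¹ = C / (1+t)^(d+1:ℕ) by ring, le_div_iff₀ (by positivity)]
    have hsplit : exp (-β * t) = exp β * exp (-(β * (1 + t))) := by
      rw [← Real.exp_add]; congr 1; ring
    rw [hsplit]
    calc exp β * exp (-(β * (1 + t))) * (1+t)^(d+1:ℕ)
        = exp β * ((1+t)^(d+1:ℕ) * exp (-(β * (1 + t)))) := by ring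
      _ ≤ exp β * (((d+1:ℕ):ℝ)^(d+1) * exp (-((d+1:ℕ):ℝ)) / β^(d+1)) := by
          apply mul_le_mul_of_nonneg_left _ (exp_nonneg _)
          exact_mod_cast myPolyExp' (d+1) hβ hs.le
      _ = C := rfl

lemma myNoiseBound (d : ℕ) (hd : 0 < d) {β δ : ℝ} (hβ : 0 < β) (hδ : δ ∈ Ioo (0:ℝ) 1) :
    ENNReal.ofReal (1 - δ) ≤
      noiseP d β (Metric.closedBall 0 ((d:ℝ) * Real.log ((d:ℝ)/δ) / β)) := by
  obtain ⟨hδ0, hδ1⟩ := hδ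
  have hd' : (0:ℝ) < d := by exact_mod_cast hd
  have hd1 : (1:ℝ) ≤ d := by exact_mod_cast hd
  haveI : Nontrivial (Vec d) :=
    Module.nontrivial_of_finrank_pos (R := ℝ)
      (by rw [finrank_euclideanSpace_fin]; exact hd)
  set R := (d:ℝ) * Real.log ((d:ℝ)/δ) / β with hRdef
  have hR0 : 0 ≤ R := by
    apply div_nonneg _ hβ.le
    apply mul_nonneg hd'.le
    apply Real.log_nonneg
    rw [le_div_iff₀ hδ0]
    linarith
  set c := (volume (Metric.ball (0:Vec d) 1)).toReal with hcdef
  have hc : 0 < c := ENNReal.toReal_pos (Metric.measure_ball_pos volume 0 one_pos).ne'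
    measure_ball_lt_top.ne
  have hdim : Module.finrank ℝ (Vec d) = d := finrank_euclideanSpace_fin
  have hpolar : ∀ f : ℝ → ℝ, ∫ x : Vec d, f ‖x‖ =
      (d:ℝ) * (c * ∫ y in Ioi (0:ℝ), y ^ (d-1) * f y) := by
    intro f
    have h := integral_fun_norm_addHaar (volume : Measure (Vec d)) f
    rw [hdim] at h
    simpa only [nsmul_eq_mul, smul_eq_mul, mul_assoc, Measure.real] using h
  set Ifull := ∫ y in Ioi (0:ℝ), y ^ (d-1) * exp (-β * y) with hIfull
  set Itail := ∫ y in Ioi R, y ^ (d-1) * exp (-β * y) with hItail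
  have hIfullpos : 0 < Ifull := by
    rw [hIfull, myFullIntegral (d-1) hβ]
    have := Nat.factorial_pos (d-1)
    positivity
  have hItaille : Itail ≤ δ * Ifull := by
    calc Itail ≤ (exp (-((d:ℝ)-1)) * ((d:ℝ)/β) ^ (d-1)) * (exp (-(β/d) * R) / (β/d)) :=
          myTailBound hd hβ hR0
      _ ≤ δ * ((1/β) ^ ((d-1) + 1) * (Nat.factorial (d-1) : ℝ)) := myRatio d hd hβ hδ0 hδ1
      _ = δ * Ifull := by rw [hIfull, myFullIntegral (d-1) hβ]
  -- the two set integrals over Vec d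
  set A := ∫ x : Vec d, exp (-β * ‖x‖) with hAdef
  have hA : A = (d:ℝ) * (c * Ifull) := hpolar (fun y => exp (-β * y))
  have hApos : 0 < A := by rw [hA]; positivity
  set S := (Metric.closedBall (0:Vec d) R)ᶜ with hSdef
  have hSmeas : MeasurableSet S := measurableSet_closedBall.compl
  have hT : ∫ x in S, exp (-β * ‖x‖) = (d:ℝ) * (c * Itail) := by
    have hind : (fun x : Vec d => (Ioi R).indicator (fun y => exp (-β * y)) ‖x‖) =
        S.indicator (fun x => exp (-β * ‖x‖)) := by
      funext x
      have hmem : x ∈ S ↔ R < ‖x‖ := by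
        simp [hSdef, Metric.mem_closedBall, dist_zero_right, not_le]
      by_cases h : R < ‖x‖
      · rw [Set.indicator_of_mem (mem_Ioi.2 h), Set.indicator_of_mem (hmem.2 h)]
      · rw [Set.indicator_of_notMem (by simpa using h),
          Set.indicator_of_notMem (fun hx => h (hmem.1 hx))]
    have h := hpolar ((Ioi R).indicator (fun y => exp (-β * y)))
    rw [hind] at h
    rw [integral_indicator hSmeas] at h
    rw [h]
    congr 2
    have hptwise : ∀ y : ℝ, y ^ (d-1) * (Ioi R).indicator (fun y => exp (-β * y)) y =
        (Ioi R).indicator (fun y => y ^ (d-1) * exp (-β * y)) y := by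
      intro y
      by_cases hy : y ∈ Ioi R <;> simp [Set.indicator_apply, hy]
    rw [show (fun y : ℝ => y ^ (d-1) * (Ioi R).indicator (fun y => exp (-β * y)) y) =
        (Ioi R).indicator (fun y => y ^ (d-1) * exp (-β * y)) from funext hptwise]
    rw [setIntegral_indicator measurableSet_Ioi,
      Set.inter_eq_self_of_subset_right (Ioi_subset_Ioi hR0)]
  set T := ∫ x in S, exp (-β * ‖x‖) with hTdef
  have hTle : T ≤ δ * A := by
    rw [hT, hA]
    have h1 : c * Itail ≤ c * (δ * Ifull) := mul_le_mul_of_nonneg_left hItaille hc.le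
    nlinarith
  have hT0 : 0 ≤ T := by
    rw [hT]
    have hItail0 : 0 ≤ Itail := by
      apply setIntegral_nonneg measurableSet_Ioi
      intro y hy
      have : 0 < y := lt_of_le_of_lt hR0 hy
      positivity
    positivity
  -- measure computations
  have hν : ∀ Q : Set (Vec d), MeasurableSet Q →
      laplaceLike d β Q = ENNReal.ofReal (∫ x in Q, exp (-β * ‖x‖)) := by
    intro Q hQ
    rw [laplaceLike, withDensity_apply _ hQ]
    exact (ofReal_integral_eq_lintegral_ofReal ((myIntegrableExp d hβ).integrableOn)
      (ae_of_all _ fun x => exp_nonneg _)).symm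
  have hνU : laplaceLike d β Set.univ = ENNReal.ofReal A := by
    rw [hν Set.univ MeasurableSet.univ, setIntegral_univ]
  have hνS : laplaceLike d β S = ENNReal.ofReal T := hν S hSmeas
  have hsum : laplaceLike d β (Metric.closedBall (0:Vec d) R) + laplaceLike d β S =
      laplaceLike d β Set.univ := measure_add_measure_compl measurableSet_closedBall
  have hball : laplaceLike d β (Metric.closedBall (0:Vec d) R) =
      ENNReal.ofReal A - ENNReal.ofReal T := by
    apply ENNReal.eq_sub_of_add_eq ENNReal.ofReal_ne_top
    rw [← hνS, hsum, hνU]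
  rw [noiseP, Measure.smul_apply, smul_eq_mul, hνU, hball]
  have hmono : ENNReal.ofReal A - ENNReal.ofReal (δ * A) ≤
      ENNReal.ofReal A - ENNReal.ofReal T :=
    tsub_le_tsub_left (ENNReal.ofReal_le_ofReal hTle) _
  have hval : ENNReal.ofReal A - ENNReal.ofReal (δ * A) =
      ENNReal.ofReal (1 - δ) * ENNReal.ofReal A := by
    rw [← ENNReal.ofReal_sub _ (by positivity), ← ENNReal.ofReal_mul (by linarith)]
    congr 1
    ring
  calc ENNReal.ofReal (1 - δ)
      = (ENNReal.ofReal A)⁻¹ * (ENNReal.ofReal (1 - δ) * ENNReal.ofReal A) := by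
        rw [mul_comm (ENNReal.ofReal (1 - δ)), ← mul_assoc,
          ENNReal.inv_mul_cancel (ENNReal.ofReal_pos.2 hApos).ne' ENNReal.ofReal_ne_top,
          one_mul]
    _ = (ENNReal.ofReal A)⁻¹ * (ENNReal.ofReal A - ENNReal.ofReal (δ * A)) := by rw [hval]
    _ ≤ (ENNReal.ofReal A)⁻¹ * (ENNReal.ofReal A - ENNReal.ofReal T) :=
        mul_le_mul_right hmono _

/-- Lemma 18: suppose ε_p' > 0 in Algorithm 2 (so Δ = 0), N is
1-strongly convex and globally differentiable, and ℓ is convex and differentiable with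
|ℓ'(z)| ≤ 1. If f* minimizes J(·,D) and f_priv minimizes J(·,D) + (1/n)bᵀ·, with b drawn
from the density ∝ e^{-(ε_p/2)‖b‖} (so ‖b‖ ~ Gamma(d, 2/ε_p)), then with probability
≥ 1 − δ over b, J(f_priv, D) ≤ J(f*, D) + 4d²log²(d/δ)/(Λn²ε_p²). -/
theorem objective_perturbation_training_error
    (d n : ℕ) (hn : 0 < n) (Λ εp δ : ℝ)
    (hΛ : 0 < Λ) (hεp : 0 < εp) (hδ : δ ∈ Set.Ioo (0:ℝ) 1)
    (ℓ : ℝ → ℝ) (N : Vec d → ℝ)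
    (hNsc : SConvex 1 N) (hNdiff : Differentiable ℝ N)
    (hℓconv : ConvexOn ℝ Set.univ ℓ) (hℓdiff : Differentiable ℝ ℓ)
    (hℓderiv : ∀ z : ℝ, |deriv ℓ z| ≤ 1)
    (D : Dataset d n) (hD : ValidDataset D)
    (fstar : Vec d) (hfstar : ∀ g : Vec d, J ℓ N Λ D fstar ≤ J ℓ N Λ D g)
    (fout : Vec d → Vec d)
    (hfout : ∀ b g : Vec d,
      J ℓ N Λ D (fout b) + (1 / (n : ℝ)) * (inner ℝ b (fout b) : ℝ) ≤
        J ℓ N Λ D g + (1 / (n : ℝ)) * (inner ℝ b g : ℝ)) :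
    ENNReal.ofReal (1 - δ) ≤
      noiseP d (εp / 2)
        {b : Vec d | J ℓ N Λ D (fout b) ≤ J ℓ N Λ D fstar +
          4 * (d : ℝ) ^ 2 * Real.log ((d : ℝ) / δ) ^ 2 /
            (Λ * (n : ℝ) ^ 2 * εp ^ 2)} := by
  obtain ⟨hδ0, hδ1⟩ := hδ
  rcases Nat.eq_zero_or_pos d with hd0 | hd
  · subst hd0
    have hE : {b : Vec 0 | J ℓ N Λ D (fout b) ≤ J ℓ N Λ D fstar +
        4 * ((0:ℕ) : ℝ) ^ 2 * Real.log (((0:ℕ) : ℝ) / δ) ^ 2 /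
          (Λ * (n : ℝ) ^ 2 * εp ^ 2)} = Set.univ := by
      apply Set.eq_univ_of_forall
      intro b
      have hfb : fout b = fstar := Subsingleton.elim _ _
      simp only [Set.mem_setOf_eq, hfb, Nat.cast_zero]
      norm_num
    rw [hE]
    have hv : (volume : Measure (Vec 0)) Set.univ = 1 := by
      have h := (EuclideanSpace.volume_preserving_symm_measurableEquiv_toLp (ι := Fin 0)).measure_preimage
        (MeasurableSet.univ.nullMeasurableSet)
      rw [Set.preimage_univ] at h
      rw [h, volume_pi, Measure.pi_univ]
      simp
    have hν : laplaceLike 0 (εp/2) Set.univ = 1 := by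
      rw [laplaceLike, withDensity_apply _ MeasurableSet.univ, Measure.restrict_univ]
      have hone : ∀ b : Vec 0, ENNReal.ofReal (Real.exp (-(εp/2) * ‖b‖)) = 1 := by
        intro b
        have hb : ‖b‖ = 0 := by rw [Subsingleton.elim b 0, norm_zero]
        simp [hb]
      rw [lintegral_congr hone, lintegral_one, hv]
    rw [noiseP, Measure.smul_apply, smul_eq_mul, hν]
    simp only [inv_one, one_mul]
    exact ENNReal.ofReal_le_one.2 (by linarith)
  · have hβ : (0:ℝ) < εp / 2 := by linarith
    have hd' : (0:ℝ) < d := by exact_mod_cast hd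
    have hd1 : (1:ℝ) ≤ d := by exact_mod_cast hd
    set R := (d:ℝ) * Real.log ((d:ℝ)/δ) / (εp/2) with hRdef
    have hR0 : 0 ≤ R := by
      apply div_nonneg _ hβ.le
      apply mul_nonneg hd'.le
      apply Real.log_nonneg
      rw [le_div_iff₀ hδ0]
      linarith
    have hn' : (0:ℝ) < n := by exact_mod_cast hn
    have hsub : Metric.closedBall (0 : Vec d) R ⊆
        {b : Vec d | J ℓ N Λ D (fout b) ≤ J ℓ N Λ D fstar +
          4 * (d : ℝ) ^ 2 * Real.log ((d : ℝ) / δ) ^ 2 /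
            (Λ * (n : ℝ) ^ 2 * εp ^ 2)} := by
      intro b hb
      have hbR : ‖b‖ ≤ R := by
        rwa [Metric.mem_closedBall, dist_zero_right] at hb
      have h1 := myDetBound hn hΛ ℓ N D hNsc hℓconv fstar hfstar fout hfout b
      have h2 : ‖b‖ ^ 2 ≤ R ^ 2 := pow_le_pow_left₀ (norm_nonneg _) hbR 2
      have h3 : ‖b‖ ^ 2 / (Λ * (n:ℝ) ^ 2) ≤ R ^ 2 / (Λ * (n:ℝ) ^ 2) :=
        div_le_div_of_nonneg_right h2 (by positivity) |>.trans_eq rfl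
      have h4 : R ^ 2 / (Λ * (n:ℝ) ^ 2) =
          4 * (d : ℝ) ^ 2 * Real.log ((d : ℝ) / δ) ^ 2 / (Λ * (n : ℝ) ^ 2 * εp ^ 2) := by
        rw [hRdef]
        field_simp
        ring
      rw [Set.mem_setOf_eq]
      calc J ℓ N Λ D (fout b) ≤ J ℓ N Λ D fstar + ‖b‖ ^ 2 / (Λ * (n:ℝ) ^ 2) := h1
        _ ≤ J ℓ N Λ D fstar + R ^ 2 / (Λ * (n:ℝ) ^ 2) := by linarith
        _ = J ℓ N Λ D fstar +
            4 * (d : ℝ) ^ 2 * Real.log ((d : ℝ) / δ) ^ 2 /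
              (Λ * (n : ℝ) ^ 2 * εp ^ 2) := by rw [h4]
    calc ENNReal.ofReal (1 - δ)
        ≤ noiseP d (εp/2) (Metric.closedBall 0 R) := myNoiseBound d hd hβ ⟨hδ0, hδ1⟩
      _ ≤ _ := measure_mono hsub

end
end

section
/- Suppose each of the m base learning algorithms used in step 2 of the tuning procedure (Algorithm 4) provides ε_p-differential privacy. Then the output of the tuning procedure is ε_p-differentially private: for every measurable set S of classifiers and every pair of datasets D, D' differing in the private value of one individual, ℙ(f_priv ∈ S | D) ≤ e^{ε_p} ℙ(f_priv ∈ S | D'). -/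
open MeasureTheory Real Set
open scoped ENNReal

noncomputable section

/-- Number of mistakes of the linear classifier f on a validation set V. -/
def mistakes {d k : ℕ} (f : Vec d) (V : Dataset d k) : ℕ :=
  (Finset.univ.filter fun i => (V i).2 * (inner ℝ f (V i).1 : ℝ) ≤ 0).card

/-- The exponential-mechanism selection weight q_i = e^{-ε_p z_i/2}/Σ_j e^{-ε_p z_j/2}
for the i-th candidate classifier, given the tuple of trained classifiers fs and the
validation set V. -/
def selWeight {d k m : ℕ} (εp : ℝ) (fs : Fin m → Vec d) (V : Dataset d k) (i : Fin m) : ℝ :=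
  Real.exp (-εp * (mistakes (fs i) V : ℝ) / 2) /
    ∑ j, Real.exp (-εp * (mistakes (fs j) V : ℝ) / 2)

/-- The output distribution of the tuning procedure (Algorithm 4): the database is split
into m+1 portions, the i-th base algorithm is run on portion i, and the i-th trained
classifier is released with probability q_i. -/
def tuningOutput {d k m : ℕ} (εp : ℝ) (A : Fin m → Dataset d k → Measure (Vec d))
    (D : Fin (m + 1) → Dataset d k) (S : Set (Vec d)) : ℝ≥0∞ :=
  ∫⁻ fs : Fin m → Vec d,
      ∑ i, ENNReal.ofReal (selWeight εp fs (D (Fin.last m)) i) *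
        S.indicator (fun _ => (1 : ℝ≥0∞)) (fs i)
    ∂(Measure.pi fun i => A i (D i.castSucc))

/-- Monotonicity of product measures in each factor. -/
lemma pi_mono' {ι : Type*} [Fintype ι] {α : ι → Type*} [∀ i, MeasurableSpace (α i)]
    {μ ν : ∀ i, Measure (α i)} (h : ∀ i, μ i ≤ ν i) :
    Measure.pi μ ≤ Measure.pi ν := by
  rw [Measure.le_iff]
  intro s hs
  rw [Measure.pi, Measure.pi, toMeasure_apply _ _ hs, toMeasure_apply _ _ hs,
    OuterMeasure.pi, OuterMeasure.pi, OuterMeasure.boundedBy_apply,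
    OuterMeasure.boundedBy_apply]
  refine iInf_mono fun t => iInf_mono fun ht => ENNReal.tsum_le_tsum fun n =>
    iSup_mono fun _ => Finset.prod_le_prod' fun i _ => ?_
  exact Measure.le_iff'.mp (h i) _

/-- Scaling one factor of a product measure scales the product. -/
lemma pi_update_smul {ι : Type*} [Fintype ι] [DecidableEq ι] {α : ι → Type*}
    [∀ i, MeasurableSpace (α i)] (μ : ∀ i, Measure (α i)) [∀ i, IsFiniteMeasure (μ i)]
    (i₀ : ι) (c : ℝ≥0∞) (hc : c ≠ ∞) :
    Measure.pi (Function.update μ i₀ (c • μ i₀)) = c • Measure.pi μ := by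
  haveI : ∀ i, IsFiniteMeasure (Function.update μ i₀ (c • μ i₀) i) := by
    intro i
    rcases eq_or_ne i i₀ with rfl | hne
    · rw [Function.update_self]
      refine ⟨?_⟩
      rw [Measure.smul_apply, smul_eq_mul]
      exact ENNReal.mul_lt_top hc.lt_top (measure_lt_top _ _)
    · rw [Function.update_of_ne hne]
      infer_instance
  haveI : ∀ i, SigmaFinite (Function.update μ i₀ (c • μ i₀) i) := fun i => inferInstance
  apply Measure.pi_eq
  intro s hs
  rw [Measure.smul_apply, Measure.pi_pi, smul_eq_mul]
  rw [← Finset.mul_prod_erase Finset.univ (fun i => Function.update μ i₀ (c • μ i₀) i (s i))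
      (Finset.mem_univ i₀),
    ← Finset.mul_prod_erase Finset.univ (fun i => μ i (s i)) (Finset.mem_univ i₀)]
  have h1 : ∏ j ∈ Finset.univ.erase i₀, Function.update μ i₀ (c • μ i₀) j (s j)
      = ∏ j ∈ Finset.univ.erase i₀, μ j (s j) :=
    Finset.prod_congr rfl fun j hj => by rw [Function.update_of_ne (Finset.ne_of_mem_erase hj)]
  rw [h1, Function.update_self, Measure.smul_apply, smul_eq_mul, mul_assoc]

/-- Changing one entry of the validation set changes the mistake count by at most one. -/
lemma mistakes_le_neighbor {d k : ℕ} {V V' : Dataset d k} (h : Neighbor V V')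
    (f : Vec d) : mistakes f V ≤ mistakes f V' + 1 := by
  obtain ⟨j, hj⟩ := h
  unfold mistakes
  have hsub : (Finset.univ.filter fun i => (V i).2 * (inner ℝ f (V i).1 : ℝ) ≤ 0) ⊆
      insert j (Finset.univ.filter fun i => (V' i).2 * (inner ℝ f (V' i).1 : ℝ) ≤ 0) := by
    intro i hi
    rcases eq_or_ne i j with rfl | hij
    · exact Finset.mem_insert_self _ _
    · refine Finset.mem_insert_of_mem ?_
      simp only [Finset.mem_filter, Finset.mem_univ, true_and] at hi ⊢
      rw [← hj i hij]; exact hi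
  calc (Finset.univ.filter fun i => (V i).2 * (inner ℝ f (V i).1 : ℝ) ≤ 0).card
      ≤ (insert j (Finset.univ.filter fun i =>
          (V' i).2 * (inner ℝ f (V' i).1 : ℝ) ≤ 0)).card := Finset.card_le_card hsub
    _ ≤ _ := Finset.card_insert_le _ _

/-- The selection weights of the exponential mechanism change by a factor of at most
`exp εp` when one validation entry changes. -/
lemma selWeight_le_neighbor {d k m : ℕ} (hm : 0 < m) {εp : ℝ} (hεp : 0 < εp)
    (fs : Fin m → Vec d) {V V' : Dataset d k} (h : Neighbor V V') (i : Fin m) :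
    selWeight εp fs V i ≤ Real.exp εp * selWeight εp fs V' i := by
  have h' : Neighbor V' V := by obtain ⟨j, hj⟩ := h; exact ⟨j, fun i hi => (hj i hi).symm⟩
  have key : ∀ (a b : ℕ), a ≤ b + 1 →
      Real.exp (-εp * (b : ℝ) / 2) ≤ Real.exp (εp / 2) * Real.exp (-εp * (a : ℝ) / 2) := by
    intro a b hab
    have hab' : (a : ℝ) ≤ (b : ℝ) + 1 := by exact_mod_cast hab
    rw [← Real.exp_add]
    apply Real.exp_le_exp.mpr
    nlinarith [hεp.le]
  haveI : Nonempty (Fin m) := ⟨⟨0, hm⟩⟩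
  have hden : (0 : ℝ) < ∑ j, Real.exp (-εp * (mistakes (fs j) V : ℝ) / 2) :=
    Finset.sum_pos (fun j _ => Real.exp_pos _) Finset.univ_nonempty
  have hden' : (0 : ℝ) < ∑ j, Real.exp (-εp * (mistakes (fs j) V' : ℝ) / 2) :=
    Finset.sum_pos (fun j _ => Real.exp_pos _) Finset.univ_nonempty
  have hnum : Real.exp (-εp * (mistakes (fs i) V : ℝ) / 2) ≤
      Real.exp (εp / 2) * Real.exp (-εp * (mistakes (fs i) V' : ℝ) / 2) :=
    key _ _ (mistakes_le_neighbor h' (fs i))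
  have hdens : (∑ j, Real.exp (-εp * (mistakes (fs j) V' : ℝ) / 2)) ≤
      Real.exp (εp / 2) * ∑ j, Real.exp (-εp * (mistakes (fs j) V : ℝ) / 2) := by
    rw [Finset.mul_sum]
    exact Finset.sum_le_sum fun j _ => key _ _ (mistakes_le_neighbor h (fs j))
  simp only [selWeight]
  rw [← mul_div_assoc, div_le_div_iff₀ hden hden']
  calc Real.exp (-εp * (mistakes (fs i) V : ℝ) / 2) *
        ∑ j, Real.exp (-εp * (mistakes (fs j) V' : ℝ) / 2)
      ≤ (Real.exp (εp / 2) * Real.exp (-εp * (mistakes (fs i) V' : ℝ) / 2)) *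
        (Real.exp (εp / 2) * ∑ j, Real.exp (-εp * (mistakes (fs j) V : ℝ) / 2)) :=
        mul_le_mul hnum hdens hden'.le (by positivity)
    _ = Real.exp εp * Real.exp (-εp * (mistakes (fs i) V' : ℝ) / 2) *
        ∑ j, Real.exp (-εp * (mistakes (fs j) V : ℝ) / 2) := by
        rw [mul_mul_mul_comm, ← Real.exp_add, show εp / 2 + εp / 2 = εp by ring, ← mul_assoc]

/-- Theorem 24: if each of the m base learning algorithms is
ε_p-differentially private, then the tuning procedure (Algorithm 4) is
ε_p-differentially private: ℙ(f_priv ∈ S | D) ≤ e^{ε_p} ℙ(f_priv ∈ S | D') for every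
measurable S and every pair of databases differing in the value of one individual. -/
theorem tuning_procedure_private
    (d k m : ℕ) (hk : 0 < k) (hm : 0 < m) (εp : ℝ) (hεp : 0 < εp)
    (A : Fin m → Dataset d k → Measure (Vec d))
    (hAprob : ∀ (i : Fin m) (Di : Dataset d k), IsProbabilityMeasure (A i Di))
    (hADP : ∀ i : Fin m, DiffPrivate εp (A i))
    (D D' : Fin (m + 1) → Dataset d k)
    (hD : ∀ j, ValidDataset (D j)) (hD' : ∀ j, ValidDataset (D' j))
    (hne : ∃ j₀ : Fin (m + 1),
      (∀ j, j ≠ j₀ → D j = D' j) ∧ Neighbor (D j₀) (D' j₀))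
    (S : Set (Vec d)) (hS : MeasurableSet S) :
    tuningOutput εp A D S ≤
      ENNReal.ofReal (Real.exp εp) * tuningOutput εp A D' S := by
  obtain ⟨j₀, hagree, hnb⟩ := hne
  set c : ℝ≥0∞ := ENNReal.ofReal (Real.exp εp) with hc
  have hcne : c ≠ ∞ := ENNReal.ofReal_ne_top
  by_cases hlast : j₀ = Fin.last m
  · -- the validation set differs
    subst hlast
    have hmeas : (fun i : Fin m => A i (D i.castSucc)) =
        fun i : Fin m => A i (D' i.castSucc) :=
      funext fun i => by rw [hagree _ (Fin.castSucc_lt_last i).ne]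
    unfold tuningOutput
    rw [hmeas, ← lintegral_const_mul' c _ hcne]
    refine lintegral_mono fun fs => ?_
    rw [Finset.mul_sum]
    refine Finset.sum_le_sum fun i _ => ?_
    rw [← mul_assoc, ← ENNReal.ofReal_mul (Real.exp_pos εp).le]
    exact mul_le_mul' (ENNReal.ofReal_le_ofReal
      (selWeight_le_neighbor hm hεp fs hnb i)) le_rfl
  · -- one of the training sets differs
    obtain ⟨i₀, rfl⟩ := Fin.exists_castSucc_eq.mpr hlast
    have hV : D (Fin.last m) = D' (Fin.last m) :=
      hagree _ (Fin.castSucc_lt_last i₀).ne'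
    set μ : ∀ _ : Fin m, Measure (Vec d) := fun i => A i (D i.castSucc) with hμ
    set μ' : ∀ _ : Fin m, Measure (Vec d) := fun i => A i (D' i.castSucc) with hμ'
    haveI : ∀ i, IsProbabilityMeasure (μ' i) := fun i => hAprob i _
    haveI : ∀ i, IsFiniteMeasure (μ' i) := fun i => inferInstance
    have hle : ∀ i, μ i ≤ Function.update μ' i₀ (c • μ' i₀) i := by
      intro i
      rcases eq_or_ne i i₀ with rfl | hne
      · rw [Function.update_self, Measure.le_iff]
        intro s hs
        rw [Measure.smul_apply, smul_eq_mul]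
        exact hADP i (D i.castSucc) (D' i.castSucc) (hD _) (hD' _) hnb s hs
      · rw [Function.update_of_ne hne]
        show A i (D i.castSucc) ≤ A i (D' i.castSucc)
        rw [hagree i.castSucc (fun hcs => hne (Fin.castSucc_injective m hcs))]
    unfold tuningOutput
    rw [hV]
    calc ∫⁻ fs : Fin m → Vec d,
          (∑ i, ENNReal.ofReal (selWeight εp fs (D' (Fin.last m)) i) *
            S.indicator (fun _ => (1 : ℝ≥0∞)) (fs i)) ∂(Measure.pi μ)
        ≤ ∫⁻ fs : Fin m → Vec d,
          (∑ i, ENNReal.ofReal (selWeight εp fs (D' (Fin.last m)) i) *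
            S.indicator (fun _ => (1 : ℝ≥0∞)) (fs i))
            ∂(Measure.pi (Function.update μ' i₀ (c • μ' i₀))) :=
          lintegral_mono' (pi_mono' hle) le_rfl
      _ = c * ∫⁻ fs : Fin m → Vec d,
          (∑ i, ENNReal.ofReal (selWeight εp fs (D' (Fin.last m)) i) *
            S.indicator (fun _ => (1 : ℝ≥0∞)) (fs i)) ∂(Measure.pi μ') := by
          rw [pi_update_smul μ' i₀ c hcne, lintegral_smul_measure, smul_eq_mul]
end
end
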